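/- arXiv:1107.4943 — 2 statements merged into one kernel-verified Lean document; each statement's English description precedes it below -/
import Mathlib

section
/- Let (S_n^{(1)}, S_n^{(2)}) be a bivariate random walk (i.i.d. ℝ²-valued increments) such that (S_1^{(1)}, S_1^{(2)}) has the same distribution as (S_1^{(1)}, −S_1^{(2)}). Then for every n ≥ 1 and every Borel set B ⊆ ℝ: P(S_n^{(1)} ∈ B, min_{1≤i≤n} S_i^{(2)} > 0) ≤ P(S_n^{(1)} ∈ B) · P(min_{1≤i≤n} S_i^{(2)} ≥ 0). -/
open Finset

namespace SA

open scoped Classical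

noncomputable section

def sg (b : Bool) : ℝ := if b then 1 else -1

lemma sg_ne_zero (b : Bool) : sg b ≠ 0 := by cases b <;> norm_num [sg]

lemma abs_sg (b : Bool) : |sg b| = 1 := by cases b <;> norm_num [sg]

lemma sg_not (b : Bool) : sg (!b) = - sg b := by cases b <;> norm_num [sg]

abbrev Arr (n : ℕ) := Equiv.Perm (Fin n) × (Fin n → Bool)

variable {n : ℕ}

def psum (a : Fin n → ℝ) (d : Arr n) (k : ℕ) : ℝ :=
  ∑ i ∈ univ.filter (fun i : Fin n => (i : ℕ) < k), sg (d.2 i) * a (d.1 i)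

lemma psum_zero (a : Fin n → ℝ) (d : Arr n) : psum a d 0 = 0 := by
  simp [psum]

def isPos (a : Fin n → ℝ) (d : Arr n) : Prop := ∀ k, 1 ≤ k → k ≤ n → 0 < psum a d k
def isNn (a : Fin n → ℝ) (d : Arr n) : Prop := ∀ k, 1 ≤ k → k ≤ n → 0 ≤ psum a d k
def isSM (a : Fin n → ℝ) (d : Arr n) : Prop := ∀ k, k < n → psum a d n < psum a d k
def isWM (a : Fin n → ℝ) (d : Arr n) : Prop := ∀ k, k < n → psum a d n ≤ psum a d k

def Npos (a : Fin n → ℝ) : ℕ := (univ.filter (fun d : Arr n => isPos a d)).card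
def Nnn (a : Fin n → ℝ) : ℕ := (univ.filter (fun d : Arr n => isNn a d)).card
def Nsm (a : Fin n → ℝ) : ℕ := (univ.filter (fun d : Arr n => isSM a d)).card
def Nwm (a : Fin n → ℝ) : ℕ := (univ.filter (fun d : Arr n => isWM a d)).card

/-- reversal-negation involution -/
def revd (d : Arr n) : Arr n := (Fin.revPerm.trans d.1, fun i => ! d.2 (Fin.rev i))

lemma revd_revd (d : Arr n) : revd (revd d) = d := by
  unfold revd
  refine Prod.ext ?_ ?_
  · ext i
    simp [Equiv.trans_apply]
  · funext i
    simp

lemma psum_filter_univ (a : Fin n → ℝ) (d : Arr n) : psum a d n = ∑ i : Fin n, sg (d.2 i) * a (d.1 i) := by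
  unfold psum
  congr 1
  simp [Finset.filter_true_of_mem, Fin.is_lt]

lemma psum_revd (a : Fin n → ℝ) (d : Arr n) (k : ℕ) (hk : k ≤ n) :
    psum a (revd d) k = psum a d (n - k) - psum a d n := by
  have key : psum a (revd d) k = - ∑ i ∈ univ.filter (fun i : Fin n => n - k ≤ (i : ℕ)), sg (d.2 i) * a (d.1 i) := by
    unfold psum revd
    rw [← Finset.sum_neg_distrib]
    refine Finset.sum_nbij' (fun i => Fin.rev i) (fun i => Fin.rev i) ?_ ?_ ?_ ?_ ?_
    · intro i hi
      simp only [mem_filter, mem_univ, true_and] at hi ⊢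
      have := i.is_lt
      simp [Fin.val_rev]
      omega
    · intro i hi
      simp only [mem_filter, mem_univ, true_and] at hi ⊢
      have := i.is_lt
      simp [Fin.val_rev]
      omega
    · intro i _; exact Fin.rev_rev i
    · intro i _; exact Fin.rev_rev i
    · intro i _
      simp only [Equiv.trans_apply, Fin.revPerm_apply, sg_not, Fin.rev_rev]
      ring
  rw [key]
  have split : (univ.filter (fun i : Fin n => (i : ℕ) < n - k)) ∪ (univ.filter (fun i : Fin n => n - k ≤ (i : ℕ))) = univ := by
    ext i; simp; omega
  have disj : Disjoint (univ.filter (fun i : Fin n => (i : ℕ) < n - k)) (univ.filter (fun i : Fin n => n - k ≤ (i : ℕ))) := by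
    rw [Finset.disjoint_filter]
    intro i _ h; omega
  have := Finset.sum_union (f := fun i : Fin n => sg (d.2 i) * a (d.1 i)) disj
  rw [split] at this
  rw [psum_filter_univ] at *
  unfold psum
  rw [this]
  ring

lemma isPos_revd_iff (a : Fin n → ℝ) (d : Arr n) : isPos a (revd d) ↔ isSM a d := by
  constructor
  · intro h k hk
    have h2 := h (n - k) (by omega) (by omega)
    rw [psum_revd a d (n - k) (by omega)] at h2
    have : n - (n - k) = k := by omega
    rw [this] at h2
    linarith
  · intro h k hk1 hk2
    rw [psum_revd a d k hk2]
    have := h (n - k) (by omega)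
    linarith

lemma isNn_revd_iff (a : Fin n → ℝ) (d : Arr n) : isNn a (revd d) ↔ isWM a d := by
  constructor
  · intro h k hk
    have h2 := h (n - k) (by omega) (by omega)
    rw [psum_revd a d (n - k) (by omega)] at h2
    have : n - (n - k) = k := by omega
    rw [this] at h2
    linarith
  · intro h k hk1 hk2
    rw [psum_revd a d k hk2]
    have := h (n - k) (by omega)
    linarith

lemma Nsm_eq_Npos (a : Fin n → ℝ) : Nsm a = Npos a := by
  unfold Nsm Npos
  refine Finset.card_bij' (fun d _ => revd d) (fun d _ => revd d) ?_ ?_ ?_ ?_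
  · intro d hd
    simp only [mem_filter, mem_univ, true_and] at hd ⊢
    rw [isPos_revd_iff]; exact hd
  · intro d hd
    simp only [mem_filter, mem_univ, true_and] at hd ⊢
    have h2 : isPos a (revd (revd d)) := by rw [revd_revd]; exact hd
    exact (isPos_revd_iff a (revd d)).mp h2
  · intro d _; exact revd_revd d
  · intro d _; exact revd_revd d

lemma Nwm_eq_Nnn (a : Fin n → ℝ) : Nwm a = Nnn a := by
  unfold Nwm Nnn
  refine Finset.card_bij' (fun d _ => revd d) (fun d _ => revd d) ?_ ?_ ?_ ?_
  · intro d hd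
    simp only [mem_filter, mem_univ, true_and] at hd ⊢
    rw [isNn_revd_iff]; exact hd
  · intro d hd
    simp only [mem_filter, mem_univ, true_and] at hd ⊢
    have h2 : isNn a (revd (revd d)) := by rw [revd_revd]; exact hd
    exact (isNn_revd_iff a (revd d)).mp h2
  · intro d _; exact revd_revd d
  · intro d _; exact revd_revd d


-- ### coefficient vectors
def IsCoeff (c : Fin n → ℝ) : Prop := ∀ i, c i = 1 ∨ c i = -1 ∨ c i = 0

def Generic (a : Fin n → ℝ) : Prop :=
  ∀ c : Fin n → ℝ, IsCoeff c → (∃ i, c i ≠ 0) → ∑ i, c i * a i ≠ 0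

def coeffOf (d : Arr n) (k : ℕ) : Fin n → ℝ :=
  fun j => if (d.1.symm j : ℕ) < k then sg (d.2 (d.1.symm j)) else 0

lemma isCoeff_coeffOf (d : Arr n) (k : ℕ) : IsCoeff (coeffOf d k) := by
  intro j
  unfold coeffOf
  by_cases h : (d.1.symm j : ℕ) < k
  · simp only [h, if_true]
    cases d.2 (d.1.symm j) <;> simp [sg]
  · simp [h]

lemma psum_eq_coeff (a : Fin n → ℝ) (d : Arr n) (k : ℕ) :
    psum a d k = ∑ j, coeffOf d k j * a j := by
  rw [← Equiv.sum_comp d.1 (fun j => coeffOf d k j * a j)]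
  unfold psum coeffOf
  rw [Finset.sum_filter]
  congr 1
  funext i
  simp only [Equiv.symm_apply_apply]
  by_cases h : (i : ℕ) < k <;> simp [h]

lemma psum_ne_zero_of_generic {a : Fin n → ℝ} (hg : Generic a) (d : Arr n) {k : ℕ}
    (hk1 : 1 ≤ k) (hk2 : k ≤ n) : psum a d k ≠ 0 := by
  rw [psum_eq_coeff]
  refine hg _ (isCoeff_coeffOf d k) ?_
  have hn : 0 < n := by omega
  refine ⟨d.1 ⟨0, hn⟩, ?_⟩
  unfold coeffOf
  simp only [Equiv.symm_apply_apply]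
  have : ((⟨0, hn⟩ : Fin n) : ℕ) < k := by show 0 < k; omega
  simp only [this, if_true]
  exact sg_ne_zero _

lemma Nnn_eq_Npos_of_generic {a : Fin n → ℝ} (hg : Generic a) : Nnn a = Npos a := by
  unfold Nnn Npos
  congr 1
  apply Finset.filter_congr
  intro d _
  constructor
  · intro h k hk1 hk2
    exact lt_of_le_of_ne (h k hk1 hk2) (Ne.symm (psum_ne_zero_of_generic hg d hk1 hk2))
  · intro h k hk1 hk2
    exact le_of_lt (h k hk1 hk2)

-- ### restriction
def restr (a : Fin n → ℝ) (S : Finset (Fin n)) : Fin S.card → ℝ :=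
  fun i => a (S.orderEmbOfFin rfl i)

lemma generic_restr {a : Fin n → ℝ} (hg : Generic a) (S : Finset (Fin n)) :
    Generic (restr a S) := by
  intro c hc ⟨i0, hi0⟩
  set e := S.orderEmbOfFin rfl with he
  have hmem : ∀ i, e i ∈ S := fun i => Finset.orderEmbOfFin_mem S rfl i
  set c' : Fin n → ℝ := fun j => if h : j ∈ S then c ((S.orderIsoOfFin rfl).symm ⟨j, h⟩) else 0 with hc'
  have hkey : ∀ i : Fin S.card, c' (e i) = c i := by
    intro i
    have h : e i ∈ S := hmem i
    simp only [hc', dif_pos h]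
    congr 1
    have : (⟨e i, h⟩ : {x // x ∈ S}) = S.orderIsoOfFin rfl i := by
      ext
      simp [he, Finset.coe_orderIsoOfFin_apply]
    rw [this]
    exact OrderIso.symm_apply_apply _ _
  have hsum : ∑ j, c' j * a j = ∑ i, c i * restr a S i := by
    rw [← Finset.sum_subset (Finset.subset_univ S)]
    · rw [← Finset.sum_coe_sort S (fun x => c' x * a x),
        ← Equiv.sum_comp (S.orderIsoOfFin rfl).toEquiv (fun x => c' x.1 * a x.1)]
      refine Finset.sum_congr rfl ?_
      intro i _
      have hco : ((S.orderIsoOfFin rfl).toEquiv i).1 = e i := by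
        simp [he, Finset.coe_orderIsoOfFin_apply]
      rw [hco, hkey]
      rfl
    · intro j _ hj
      simp [hc', hj]
  intro hzero
  refine hg c' ?_ ?_ (by rw [hsum]; exact hzero)
  · intro j
    by_cases h : j ∈ S
    · simp only [hc', dif_pos h]; exact hc _
    · simp [hc', h]
  · exact ⟨e i0, by rw [hkey]; exact hi0⟩

-- ### the generic reference vector and 3-adic estimates
def gv (n : ℕ) : Fin n → ℝ := fun i => 3 ^ (i : ℕ)

lemma sum_range_three_pow (m : ℕ) : ∑ j ∈ range m, (3:ℝ)^j = (3^m - 1)/2 := by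
  induction m with
  | zero => simp
  | succ m ih => rw [Finset.sum_range_succ, ih, pow_succ]; ring

lemma coeff_gv_abs_le {c : Fin n → ℝ} (hc : IsCoeff c) :
    |∑ i, c i * gv n i| ≤ (3:ℝ)^n := by
  calc |∑ i, c i * gv n i| ≤ ∑ i, |c i * gv n i| := Finset.abs_sum_le_sum_abs _ _
    _ ≤ ∑ i : Fin n, (3:ℝ)^(i:ℕ) := by
        refine Finset.sum_le_sum ?_
        intro i _
        rw [abs_mul]
        have h1 : |c i| ≤ 1 := by rcases hc i with h|h|h <;> simp [h]
        have h2 : |gv n i| = 3^(i:ℕ) := by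
          unfold gv; rw [abs_of_nonneg (by positivity)]
        rw [h2]
        nlinarith [pow_pos (by norm_num : (0:ℝ) < 3) (i:ℕ)]
    _ = ∑ j ∈ range n, (3:ℝ)^j := by
        rw [Finset.sum_range fun j => (3:ℝ)^j]
    _ ≤ (3:ℝ)^n := by
        rw [sum_range_three_pow]
        nlinarith [pow_pos (by norm_num : (0:ℝ) < 3) n]

lemma coeff_gv_ne_zero {c : Fin n → ℝ} (hc : IsCoeff c) (hne : ∃ i, c i ≠ 0) :
    ∑ i, c i * gv n i ≠ 0 := by
  classical
  set S := univ.filter (fun i : Fin n => c i ≠ 0) with hS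
  have hSne : S.Nonempty := by
    obtain ⟨i, hi⟩ := hne
    exact ⟨i, by simp [hS, hi]⟩
  set M := S.max' hSne with hM
  have hMS : M ∈ S := S.max'_mem hSne
  have hcM : c M = 1 ∨ c M = -1 := by
    rcases hc M with h|h|h
    · left; exact h
    · right; exact h
    · exfalso; rw [hS] at hMS; simp at hMS; exact hMS h
  have hsum : ∑ i, c i * gv n i = ∑ i ∈ S, c i * gv n i := by
    rw [← Finset.sum_subset (Finset.subset_univ S)]
    intro j _ hj
    rw [hS] at hj
    simp at hj
    simp [hj]
  have hsplit : ∑ i ∈ S, c i * gv n i = c M * gv n M + ∑ i ∈ S.erase M, c i * gv n i :=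
    (Finset.add_sum_erase S _ hMS).symm
  have hrest : |∑ i ∈ S.erase M, c i * gv n i| < 3^(M:ℕ) := by
    calc |∑ i ∈ S.erase M, c i * gv n i| ≤ ∑ i ∈ S.erase M, |c i * gv n i| := Finset.abs_sum_le_sum_abs _ _
      _ ≤ ∑ i ∈ S.erase M, (3:ℝ)^(i:ℕ) := by
          refine Finset.sum_le_sum ?_
          intro i _
          rw [abs_mul]
          have h1 : |c i| ≤ 1 := by rcases hc i with h|h|h <;> simp [h]
          have h2 : |gv n i| = 3^(i:ℕ) := by
            unfold gv; rw [abs_of_nonneg (by positivity)]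
          rw [h2]
          nlinarith [pow_pos (by norm_num : (0:ℝ) < 3) (i:ℕ)]
      _ = ∑ j ∈ (S.erase M).image (fun i : Fin n => (i:ℕ)), (3:ℝ)^j := by
          rw [Finset.sum_image (by intro x _ y _ h; exact Fin.val_injective h)]
      _ ≤ ∑ j ∈ range (M:ℕ), (3:ℝ)^j := by
          refine Finset.sum_le_sum_of_subset_of_nonneg ?_ (by intro j _ _; positivity)
          intro j hj
          simp only [Finset.mem_image] at hj
          obtain ⟨i, hi, rfl⟩ := hj
          have h1 : i ∈ S := Finset.mem_of_mem_erase hi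
          have h2 : i ≠ M := Finset.ne_of_mem_erase hi
          have h3 : i ≤ M := Finset.le_max' S i h1
          simp only [Finset.mem_range]
          exact Fin.lt_iff_val_lt_val.mp (lt_of_le_of_ne h3 h2)
      _ = ((3:ℝ)^(M:ℕ) - 1)/2 := sum_range_three_pow _
      _ < 3^(M:ℕ) := by nlinarith [pow_pos (by norm_num : (0:ℝ) < 3) (M:ℕ)]
  intro hzero
  rw [hsum, hsplit] at hzero
  have hgvM : |c M * gv n M| = 3^(M:ℕ) := by
    rw [abs_mul]
    have h1 : |c M| = 1 := by rcases hcM with h|h <;> simp [h]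
    have h2 : |gv n M| = 3^(M:ℕ) := by
      unfold gv; rw [abs_of_nonneg (by positivity)]
    rw [h1, h2, one_mul]
  have heq : |c M * gv n M| = |∑ i ∈ S.erase M, c i * gv n i| := by
    have h5 : c M * gv n M = - ∑ i ∈ S.erase M, c i * gv n i := by linarith
    rw [h5, abs_neg]
  rw [hgvM] at heq
  linarith


lemma generic_gv : Generic (gv n) := fun c hc hne => coeff_gv_ne_zero hc hne

def tr3 : Fin 3 → ℝ := ![0, 1, -1]

lemma exists_perturb (a : Fin n → ℝ) :
    ∃ a' : Fin n → ℝ, Generic a' ∧ (∀ d : Arr n, isPos a d → isPos a' d) ∧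
      (∀ d : Arr n, isPos a' d → isNn a d) := by
  classical
  set V : Finset ℝ := (univ : Finset (Fin n → Fin 3)).image (fun t => |∑ i, tr3 (t i) * a i|) with hV
  set W : Finset ℝ := insert 1 (V.filter (fun x => 0 < x)) with hW
  have hWne : W.Nonempty := ⟨1, by simp [hW]⟩
  set m₀ := W.min' hWne with hm₀
  have hm₀pos : 0 < m₀ := by
    rw [hm₀, Finset.lt_min'_iff]
    intro y hy
    rw [hW] at hy
    rcases Finset.mem_insert.mp hy with h|h
    · rw [h]; norm_num
    · exact (Finset.mem_filter.mp h).2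
  have h3n : (0:ℝ) < 3^n := by positivity
  set t := m₀ / (2 * 3^n) with ht
  have htpos : 0 < t := by rw [ht]; positivity
  have hkey : ∀ c : Fin n → ℝ,
      (∑ i, c i * (a i + t * gv n i)) = (∑ i, c i * a i) + t * ∑ i, c i * gv n i := by
    intro c
    rw [Finset.mul_sum, ← Finset.sum_add_distrib]
    apply Finset.sum_congr rfl
    intro i _; ring
  have hmem : ∀ c : Fin n → ℝ, IsCoeff c → |∑ i, c i * a i| ∈ V := by
    intro c hc
    rw [hV]
    simp only [Finset.mem_image, Finset.mem_univ, true_and]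
    refine ⟨fun i => if c i = 1 then 1 else if c i = -1 then 2 else 0, ?_⟩
    congr 1
    apply Finset.sum_congr rfl
    intro i _
    have : tr3 ((fun i => if c i = 1 then 1 else if c i = -1 then 2 else 0) i) = c i := by
      rcases hc i with h|h|h <;> norm_num [h, tr3] <;> simp
    rw [this]
  have hbig : ∀ c : Fin n → ℝ, IsCoeff c → (∑ i, c i * a i ≠ 0) → m₀ ≤ |∑ i, c i * a i| := by
    intro c hc hne
    apply Finset.min'_le
    rw [hW]
    exact Finset.mem_insert_of_mem (Finset.mem_filter.mpr ⟨hmem c hc, abs_pos.mpr hne⟩)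
  have hsmall : ∀ c : Fin n → ℝ, IsCoeff c → |t * ∑ i, c i * gv n i| ≤ m₀ / 2 := by
    intro c hc
    rw [abs_mul, abs_of_pos htpos]
    have h1 : t * |∑ i, c i * gv n i| ≤ t * 3^n :=
      mul_le_mul_of_nonneg_left (coeff_gv_abs_le hc) (le_of_lt htpos)
    have h2 : t * 3^n = m₀ / 2 := by
      rw [ht]; field_simp
    linarith
  refine ⟨fun i => a i + t * gv n i, ?_, ?_, ?_⟩
  · intro c hc hne
    rw [hkey c]
    by_cases h0 : ∑ i, c i * a i = 0
    · rw [h0, zero_add]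
      exact mul_ne_zero (ne_of_gt htpos) (coeff_gv_ne_zero hc hne)
    · have hb := hbig c hc h0
      have hs := hsmall c hc
      intro heq
      have : ∑ i, c i * a i = - (t * ∑ i, c i * gv n i) := by linarith
      rw [this, abs_neg] at hb
      linarith
  · intro d hd k hk1 hk2
    have hp := hd k hk1 hk2
    rw [psum_eq_coeff] at hp ⊢
    rw [hkey _]
    have hb := hbig _ (isCoeff_coeffOf d k) (by linarith)
    rw [abs_of_pos hp] at hb
    have hs := hsmall _ (isCoeff_coeffOf d k)
    have := neg_abs_le (t * ∑ i, coeffOf d k i * gv n i)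
    linarith
  · intro d hd k hk1 hk2
    have hp := hd k hk1 hk2
    rw [psum_eq_coeff] at hp ⊢
    rw [hkey _] at hp
    by_contra hneg
    push_neg at hneg
    have hne : ∑ i, coeffOf d k i * a i ≠ 0 := by linarith
    have hb := hbig _ (isCoeff_coeffOf d k) hne
    rw [abs_of_neg (by linarith)] at hb
    have hs := hsmall _ (isCoeff_coeffOf d k)
    have := le_abs_self (t * ∑ i, coeffOf d k i * gv n i)
    linarith


-- ### first minimum machinery
def fmSet (a : Fin n → ℝ) (d : Arr n) : Finset ℕ :=
  (range (n+1)).filter (fun k => ∀ j ∈ range (n+1), psum a d k ≤ psum a d j)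

lemma mem_fmSet {a : Fin n → ℝ} {d : Arr n} {k : ℕ} :
    k ∈ fmSet a d ↔ (k ≤ n ∧ ∀ j, j ≤ n → psum a d k ≤ psum a d j) := by
  unfold fmSet
  simp only [mem_filter, mem_range]
  constructor
  · rintro ⟨h1, h2⟩
    exact ⟨by omega, fun j hj => h2 j (by omega)⟩
  · rintro ⟨h1, h2⟩
    exact ⟨by omega, fun j hj => h2 j (by omega)⟩

lemma fmSet_nonempty (a : Fin n → ℝ) (d : Arr n) : (fmSet a d).Nonempty := by
  obtain ⟨k, hk, hmin⟩ := Finset.exists_min_image (range (n+1)) (psum a d) ⟨0, by simp⟩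
  rw [mem_range] at hk
  exact ⟨k, mem_fmSet.mpr ⟨by omega, fun j hj => hmin j (by rw [mem_range]; omega)⟩⟩

def fm (a : Fin n → ℝ) (d : Arr n) : ℕ := (fmSet a d).min' (fmSet_nonempty a d)

lemma fm_le (a : Fin n → ℝ) (d : Arr n) : fm a d ≤ n := by
  have : fm a d ∈ fmSet a d := Finset.min'_mem _ _
  exact (mem_fmSet.mp this).1

lemma fm_min (a : Fin n → ℝ) (d : Arr n) : ∀ j, j ≤ n → psum a d (fm a d) ≤ psum a d j := by
  have : fm a d ∈ fmSet a d := Finset.min'_mem _ _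
  exact (mem_fmSet.mp this).2

lemma fm_first (a : Fin n → ℝ) (d : Arr n) : ∀ j, j < fm a d → psum a d (fm a d) < psum a d j := by
  intro j hj
  have hjn : j ≤ n := le_trans (le_of_lt hj) (fm_le a d)
  by_contra hcon
  push_neg at hcon
  have hmem : j ∈ fmSet a d :=
    mem_fmSet.mpr ⟨hjn, fun j' hj' => le_trans hcon (fm_min a d j' hj')⟩
  have h5 : fm a d ≤ j := Finset.min'_le _ j hmem
  omega

lemma fm_eq_iff (a : Fin n → ℝ) (d : Arr n) (k : ℕ) (hk : k ≤ n) :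
    fm a d = k ↔ ((∀ j, j < k → psum a d k < psum a d j) ∧
      (∀ j, k ≤ j → j ≤ n → psum a d k ≤ psum a d j)) := by
  constructor
  · rintro rfl
    exact ⟨fm_first a d, fun j _ hj2 => fm_min a d j hj2⟩
  · rintro ⟨h1, h2⟩
    have hmem : k ∈ fmSet a d := by
      refine mem_fmSet.mpr ⟨hk, ?_⟩
      intro j hj
      rcases le_or_gt k j with h|h
      · exact h2 j h hj
      · exact le_of_lt (h1 j h)
    have hle : fm a d ≤ k := Finset.min'_le _ k hmem
    rcases lt_or_eq_of_le hle with h|h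
    · exfalso
      have hx := h1 (fm a d) h
      have hy := fm_min a d k hk
      linarith
    · exact h

lemma filter_fm_zero (a : Fin n → ℝ) :
    univ.filter (fun d : Arr n => fm a d = 0) = univ.filter (fun d : Arr n => isNn a d) := by
  ext d
  simp only [mem_filter, mem_univ, true_and]
  rw [fm_eq_iff a d 0 (by omega)]
  constructor
  · rintro ⟨_, h2⟩ k hk1 hk2
    have := h2 k (by omega) hk2
    rwa [psum_zero] at this
  · intro h
    refine ⟨by omega, ?_⟩
    intro j _ hj2
    rw [psum_zero]
    rcases Nat.eq_zero_or_pos j with rfl|hj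
    · rw [psum_zero]
    · exact h j hj hj2

lemma filter_fm_n (a : Fin n → ℝ) :
    univ.filter (fun d : Arr n => fm a d = n) = univ.filter (fun d : Arr n => isSM a d) := by
  ext d
  simp only [mem_filter, mem_univ, true_and]
  rw [fm_eq_iff a d n (le_refl n)]
  constructor
  · rintro ⟨h1, _⟩ k hk
    exact h1 k hk
  · intro h
    refine ⟨h, ?_⟩
    intro j hj1 hj2
    have : j = n := by omega
    rw [this]


-- ### splitting machinery
def frontPos (n k : ℕ) : Finset (Fin n) := univ.filter (fun i : Fin n => (i : ℕ) < k)

lemma card_frontPos {n k : ℕ} (hk : k ≤ n) : (frontPos n k).card = k := by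
  have heq : frontPos n k = (univ : Finset (Fin k)).image (Fin.castLE hk) := by
    ext i
    simp only [frontPos, mem_filter, mem_univ, true_and, mem_image]
    constructor
    · intro h
      exact ⟨⟨(i:ℕ), h⟩, by ext; simp⟩
    · rintro ⟨j, _, rfl⟩
      simpa using j.is_lt
  rw [heq, Finset.card_image_of_injective _ (Fin.castLE_injective hk), card_univ, Fintype.card_fin]

lemma cardS_le (S : Finset (Fin n)) : S.card ≤ n := by
  have := Finset.card_le_univ S
  simpa using this

lemma card_compl_add (S : Finset (Fin n)) : S.card + Sᶜ.card = n := by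
  rw [Finset.card_add_card_compl]
  simp

def pF (S : Finset (Fin n)) : Fin S.card → Fin n := fun i => Fin.castLE (cardS_le S) i

def pB (S : Finset (Fin n)) : Fin Sᶜ.card → Fin n :=
  fun j => ⟨S.card + (j:ℕ), by have h1 := j.is_lt; have h2 := card_compl_add S; omega⟩

lemma pF_inj (S : Finset (Fin n)) : Function.Injective (pF S) := Fin.castLE_injective (cardS_le S)

lemma pB_inj (S : Finset (Fin n)) : Function.Injective (pB S) := by
  intro i j h
  have : S.card + (i:ℕ) = S.card + (j:ℕ) := congrArg Fin.val h
  ext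
  omega

/-- the induced permutation on a block -/
def squeeze (T : Finset (Fin n)) {m : ℕ} (u : Fin T.card → Fin n) (hu : Function.Injective u)
    (π : Equiv.Perm (Fin n)) (h : ∀ i, π (u i) ∈ T) (hm : m = T.card) :
    Equiv.Perm (Fin T.card) :=
  Equiv.ofBijective (fun i => (T.orderIsoOfFin rfl).symm ⟨π (u i), h i⟩)
    (by
      refine (Finite.injective_iff_bijective).mp ?_
      intro i i' hii
      have h2 : (⟨π (u i), h i⟩ : {x // x ∈ T}) = ⟨π (u i'), h i'⟩ := by
        have := congrArg (T.orderIsoOfFin rfl) hii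
        simpa using this
      have h3 : π (u i) = π (u i') := congrArg Subtype.val h2
      exact hu (π.injective h3))

lemma squeeze_emb (T : Finset (Fin n)) {m : ℕ} (u : Fin T.card → Fin n) (hu : Function.Injective u)
    (π : Equiv.Perm (Fin n)) (h : ∀ i, π (u i) ∈ T) (hm : m = T.card) (i : Fin T.card) :
    T.orderEmbOfFin rfl (squeeze T u hu π h hm i) = π (u i) := by
  unfold squeeze
  simp only [Equiv.ofBijective_apply]
  have : ∀ z : {x // x ∈ T}, T.orderEmbOfFin rfl ((T.orderIsoOfFin rfl).symm z) = (z : Fin n) := by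
    intro z
    have h1 : (T.orderIsoOfFin rfl) ((T.orderIsoOfFin rfl).symm z) = z := OrderIso.apply_symm_apply _ _
    have h2 := Finset.coe_orderIsoOfFin_apply T rfl ((T.orderIsoOfFin rfl).symm z)
    rw [← h2, h1]
  exact this _

-- split
def splitA (S : Finset (Fin n)) (d : Arr n) (hf : ∀ i : Fin S.card, d.1 (pF S i) ∈ S) :
    Arr S.card :=
  (squeeze S (pF S) (pF_inj S) d.1 hf rfl, fun i => d.2 (pF S i))

def splitB (S : Finset (Fin n)) (d : Arr n) (hb : ∀ j : Fin Sᶜ.card, d.1 (pB S j) ∈ Sᶜ) :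
    Arr Sᶜ.card :=
  (squeeze Sᶜ (pB S) (pB_inj S) d.1 hb rfl, fun j => d.2 (pB S j))

-- join
def joinFun (S : Finset (Fin n)) (d₁ : Arr S.card) (d₂ : Arr Sᶜ.card) : Fin n → Fin n :=
  fun i => if h : (i : ℕ) < S.card then S.orderEmbOfFin rfl (d₁.1 ⟨(i:ℕ), h⟩)
    else Sᶜ.orderEmbOfFin rfl (d₂.1 ⟨(i:ℕ) - S.card,
      by have h1 := i.is_lt; have h2 := card_compl_add S; omega⟩)

lemma joinFun_inj (S : Finset (Fin n)) (d₁ : Arr S.card) (d₂ : Arr Sᶜ.card) :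
    Function.Injective (joinFun S d₁ d₂) := by
  intro i j hij
  unfold joinFun at hij
  by_cases hi : (i:ℕ) < S.card <;> by_cases hj : (j:ℕ) < S.card
  · rw [dif_pos hi, dif_pos hj] at hij
    have h1 := (S.orderEmbOfFin (rfl : S.card = S.card)).injective hij
    have h2 := d₁.1.injective h1
    have h3 := congrArg Fin.val h2
    ext
    simpa using h3
  · rw [dif_pos hi, dif_neg hj] at hij
    exfalso
    have h1 : S.orderEmbOfFin rfl (d₁.1 ⟨(i:ℕ), hi⟩) ∈ S := Finset.orderEmbOfFin_mem _ _ _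
    have h2 : ∀ z, Sᶜ.orderEmbOfFin rfl z ∈ Sᶜ := fun z => Finset.orderEmbOfFin_mem _ _ _
    rw [hij] at h1
    exact absurd h1 (Finset.mem_compl.mp (h2 _))
  · rw [dif_neg hi, dif_pos hj] at hij
    exfalso
    have h1 : S.orderEmbOfFin rfl (d₁.1 ⟨(j:ℕ), hj⟩) ∈ S := Finset.orderEmbOfFin_mem _ _ _
    have h2 : ∀ z, Sᶜ.orderEmbOfFin rfl z ∈ Sᶜ := fun z => Finset.orderEmbOfFin_mem _ _ _
    rw [← hij] at h1
    exact absurd h1 (Finset.mem_compl.mp (h2 _))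
  · rw [dif_neg hi, dif_neg hj] at hij
    have h1 := (Sᶜ.orderEmbOfFin (rfl : Sᶜ.card = Sᶜ.card)).injective hij
    have h2 := d₂.1.injective h1
    have h3 := congrArg Fin.val h2
    simp only [] at h3
    ext
    omega

def joinArr (S : Finset (Fin n)) (d₁ : Arr S.card) (d₂ : Arr Sᶜ.card) : Arr n :=
  (Equiv.ofBijective (joinFun S d₁ d₂) ((Finite.injective_iff_bijective).mp (joinFun_inj S d₁ d₂)),
   fun i => if h : (i : ℕ) < S.card then d₁.2 ⟨(i:ℕ), h⟩
    else d₂.2 ⟨(i:ℕ) - S.card, by have h1 := i.is_lt; have h2 := card_compl_add S; omega⟩)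

lemma joinArr_front (S : Finset (Fin n)) (d₁ : Arr S.card) (d₂ : Arr Sᶜ.card) (i : Fin S.card) :
    (joinArr S d₁ d₂).1 (pF S i) = S.orderEmbOfFin rfl (d₁.1 i) ∧
      (joinArr S d₁ d₂).2 (pF S i) = d₁.2 i := by
  have hlt : ((pF S i : Fin n) : ℕ) < S.card := by simp [pF]
  have hi : (⟨((pF S i : Fin n) : ℕ), hlt⟩ : Fin S.card) = i := by ext; simp [pF]
  constructor
  · show joinFun S d₁ d₂ (pF S i) = _
    unfold joinFun
    rw [dif_pos hlt, hi]
  · show (if h : _ then _ else _) = _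
    rw [dif_pos hlt, hi]

lemma joinArr_back (S : Finset (Fin n)) (d₁ : Arr S.card) (d₂ : Arr Sᶜ.card) (j : Fin Sᶜ.card) :
    (joinArr S d₁ d₂).1 (pB S j) = Sᶜ.orderEmbOfFin rfl (d₂.1 j) ∧
      (joinArr S d₁ d₂).2 (pB S j) = d₂.2 j := by
  have hlt : ¬ ((pB S j : Fin n) : ℕ) < S.card := by simp [pB]
  have hj : (⟨((pB S j : Fin n) : ℕ) - S.card, by
      have h1 := (pB S j).is_lt; have h2 := card_compl_add S; omega⟩ : Fin Sᶜ.card) = j := by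
    ext; simp [pB]
  constructor
  · show joinFun S d₁ d₂ (pB S j) = _
    unfold joinFun
    rw [dif_neg hlt]
    exact congrArg _ (congrArg d₂.1 hj)
  · show (if h : _ then _ else _) = _
    rw [dif_neg hlt]
    exact congrArg d₂.2 hj


lemma psum_split_front (a : Fin n → ℝ) (S : Finset (Fin n)) (d : Arr n)
    (hf : ∀ i : Fin S.card, d.1 (pF S i) ∈ S) {j : ℕ} (hj : j ≤ S.card) :
    psum (restr a S) (splitA S d hf) j = psum a d j := by
  unfold psum
  refine Finset.sum_bij' (fun (i : Fin S.card) _ => pF S i)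
    (fun (i : Fin n) hi => (⟨(i:ℕ), by
        simp only [mem_filter, mem_univ, true_and] at hi; omega⟩ : Fin S.card)) ?_ ?_ ?_ ?_ ?_
  · intro i hi
    simp only [mem_filter, mem_univ, true_and] at hi ⊢
    simpa [pF] using hi
  · intro i hi
    simp only [mem_filter, mem_univ, true_and] at hi ⊢
    simpa using hi
  · intro i _; ext; simp [pF]
  · intro i _; ext; simp [pF]
  · intro i _
    show sg ((splitA S d hf).2 i) * restr a S ((splitA S d hf).1 i)
      = sg (d.2 (pF S i)) * a (d.1 (pF S i))
    unfold splitA restr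
    simp only []
    congr 1
    rw [squeeze_emb]

lemma psum_split_back (a : Fin n → ℝ) (S : Finset (Fin n)) (d : Arr n)
    (hb : ∀ j : Fin Sᶜ.card, d.1 (pB S j) ∈ Sᶜ) (j : ℕ) :
    psum a d (S.card + j) = psum a d S.card + psum (restr a Sᶜ) (splitB S d hb) j := by
  unfold psum
  have hdisj : Disjoint (univ.filter (fun i : Fin n => (i:ℕ) < S.card))
      (univ.filter (fun i : Fin n => S.card ≤ (i:ℕ) ∧ (i:ℕ) < S.card + j)) := by
    rw [Finset.disjoint_filter]
    intro i _ h1 h2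
    omega
  have hsplit : univ.filter (fun i : Fin n => (i:ℕ) < S.card + j)
      = (univ.filter (fun i : Fin n => (i:ℕ) < S.card))
        ∪ (univ.filter (fun i : Fin n => S.card ≤ (i:ℕ) ∧ (i:ℕ) < S.card + j)) := by
    ext i
    simp only [mem_filter, mem_univ, true_and, mem_union]
    omega
  rw [hsplit, Finset.sum_union hdisj]
  congr 1
  refine (Finset.sum_bij' (fun (i' : Fin Sᶜ.card) _ => pB S i')
    (fun (i : Fin n) hi => (⟨(i:ℕ) - S.card, by
        have h1 := i.is_lt; have h2 := card_compl_add S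
        have h3 := (Finset.mem_filter.mp hi).2; omega⟩ : Fin Sᶜ.card)) ?_ ?_ ?_ ?_ ?_).symm
  · intro i hi
    simp only [mem_filter, mem_univ, true_and] at hi ⊢
    simp only [pB]
    omega
  · intro i hi
    simp only [mem_filter, mem_univ, true_and] at hi ⊢
    omega
  · intro i _; ext; simp [pB]
  · intro i hi
    simp only [mem_filter, mem_univ, true_and] at hi
    ext; simp [pB]; omega
  · intro i _
    show sg ((splitB S d hb).2 i) * restr a Sᶜ ((splitB S d hb).1 i)
      = sg (d.2 (pB S i)) * a (d.1 (pB S i))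
    unfold splitB restr
    simp only []
    congr 1
    rw [squeeze_emb]

lemma split_join_A (S : Finset (Fin n)) (d₁ : Arr S.card) (d₂ : Arr Sᶜ.card)
    (hf : ∀ i : Fin S.card, (joinArr S d₁ d₂).1 (pF S i) ∈ S) :
    splitA S (joinArr S d₁ d₂) hf = d₁ := by
  unfold splitA
  refine Prod.ext ?_ ?_
  · apply Equiv.ext
    intro i
    apply (S.orderEmbOfFin (rfl : S.card = S.card)).injective
    rw [squeeze_emb]
    exact (joinArr_front S d₁ d₂ i).1
  · funext i
    exact (joinArr_front S d₁ d₂ i).2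

lemma split_join_B (S : Finset (Fin n)) (d₁ : Arr S.card) (d₂ : Arr Sᶜ.card)
    (hb : ∀ j : Fin Sᶜ.card, (joinArr S d₁ d₂).1 (pB S j) ∈ Sᶜ) :
    splitB S (joinArr S d₁ d₂) hb = d₂ := by
  unfold splitB
  refine Prod.ext ?_ ?_
  · apply Equiv.ext
    intro i
    apply (Sᶜ.orderEmbOfFin (rfl : Sᶜ.card = Sᶜ.card)).injective
    rw [squeeze_emb]
    exact (joinArr_back S d₁ d₂ i).1
  · funext i
    exact (joinArr_back S d₁ d₂ i).2

lemma join_split (S : Finset (Fin n)) (d : Arr n)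
    (hf : ∀ i : Fin S.card, d.1 (pF S i) ∈ S) (hb : ∀ j : Fin Sᶜ.card, d.1 (pB S j) ∈ Sᶜ) :
    joinArr S (splitA S d hf) (splitB S d hb) = d := by
  refine Prod.ext ?_ ?_
  · apply Equiv.ext
    intro i
    by_cases h : (i:ℕ) < S.card
    · have hi : pF S ⟨(i:ℕ), h⟩ = i := by ext; simp [pF]
      have h1 := (joinArr_front S (splitA S d hf) (splitB S d hb) ⟨(i:ℕ), h⟩).1
      rw [hi] at h1
      rw [h1]
      show S.orderEmbOfFin rfl (squeeze S (pF S) (pF_inj S) d.1 hf rfl ⟨(i:ℕ), h⟩) = d.1 i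
      rw [squeeze_emb, hi]
    · have hval : S.card + ((i:ℕ) - S.card) = (i:ℕ) := by omega
      have hlt : (i:ℕ) - S.card < Sᶜ.card := by
        have h1 := i.is_lt; have h2 := card_compl_add S; omega
      have hi : pB S ⟨(i:ℕ) - S.card, hlt⟩ = i := by ext; simp [pB]; omega
      have h1 := (joinArr_back S (splitA S d hf) (splitB S d hb) ⟨(i:ℕ) - S.card, hlt⟩).1
      rw [hi] at h1
      rw [h1]
      show Sᶜ.orderEmbOfFin rfl (squeeze Sᶜ (pB S) (pB_inj S) d.1 hb rfl ⟨(i:ℕ) - S.card, hlt⟩) = d.1 i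
      rw [squeeze_emb, hi]
  · funext i
    by_cases h : (i:ℕ) < S.card
    · have hi : pF S ⟨(i:ℕ), h⟩ = i := by ext; simp [pF]
      have h1 := (joinArr_front S (splitA S d hf) (splitB S d hb) ⟨(i:ℕ), h⟩).2
      rw [hi] at h1
      rw [h1]
      show d.2 (pF S ⟨(i:ℕ), h⟩) = d.2 i
      rw [hi]
    · have hlt : (i:ℕ) - S.card < Sᶜ.card := by
        have h1 := i.is_lt; have h2 := card_compl_add S; omega
      have hi : pB S ⟨(i:ℕ) - S.card, hlt⟩ = i := by ext; simp [pB]; omega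
      have h1 := (joinArr_back S (splitA S d hf) (splitB S d hb) ⟨(i:ℕ) - S.card, hlt⟩).2
      rw [hi] at h1
      rw [h1]
      show d.2 (pB S ⟨(i:ℕ) - S.card, hlt⟩) = d.2 i
      rw [hi]


lemma derive_hf (S : Finset (Fin n)) (d : Arr n)
    (he : (frontPos n S.card).image d.1 = S) : ∀ i : Fin S.card, d.1 (pF S i) ∈ S := by
  intro i
  have h1 : pF S i ∈ frontPos n S.card := by
    simp only [frontPos, mem_filter, mem_univ, true_and, pF]
    simp
  have h2 : d.1 (pF S i) ∈ (frontPos n S.card).image d.1 := Finset.mem_image_of_mem _ h1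
  rwa [he] at h2

lemma derive_hb (S : Finset (Fin n)) (d : Arr n)
    (he : (frontPos n S.card).image d.1 = S) : ∀ j : Fin Sᶜ.card, d.1 (pB S j) ∈ Sᶜ := by
  intro j
  rw [Finset.mem_compl]
  intro hmem
  have hmem2 : d.1 (pB S j) ∈ (frontPos n S.card).image d.1 := by rw [he]; exact hmem
  rw [Finset.mem_image] at hmem2
  obtain ⟨x, hx, hxe⟩ := hmem2
  have hx2 := d.1.injective hxe
  subst hx2
  rw [frontPos, mem_filter] at hx
  have := hx.2
  simp [pB] at this

lemma fm_eq_card_iff (a : Fin n → ℝ) (S : Finset (Fin n)) (d : Arr n)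
    (hf : ∀ i : Fin S.card, d.1 (pF S i) ∈ S) (hb : ∀ j : Fin Sᶜ.card, d.1 (pB S j) ∈ Sᶜ) :
    fm a d = S.card ↔ (isSM (restr a S) (splitA S d hf) ∧ isNn (restr a Sᶜ) (splitB S d hb)) := by
  rw [fm_eq_iff a d S.card (cardS_le S)]
  constructor
  · rintro ⟨h1, h2⟩
    constructor
    · intro k hk
      rw [psum_split_front a S d hf (le_refl _), psum_split_front a S d hf (le_of_lt hk)]
      exact h1 k hk
    · intro k hk1 hk2
      have h3 := h2 (S.card + k) (by omega) (by have := card_compl_add S; omega)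
      rw [psum_split_back a S d hb k] at h3
      linarith
  · rintro ⟨h1, h2⟩
    constructor
    · intro k hk
      have h3 := h1 k hk
      rwa [psum_split_front a S d hf (le_refl _), psum_split_front a S d hf (le_of_lt hk)] at h3
    · intro k hk1 hk2
      have hkk : k = S.card + (k - S.card) := by omega
      rw [hkk, psum_split_back a S d hb (k - S.card)]
      rcases Nat.eq_zero_or_pos (k - S.card) with h0|h0
      · rw [h0, psum_zero]; linarith
      · have h4 := h2 (k - S.card) h0 (by have := card_compl_add S; omega)
        linarith

lemma join_image (S : Finset (Fin n)) (d₁ : Arr S.card) (d₂ : Arr Sᶜ.card) :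
    (frontPos n S.card).image (joinArr S d₁ d₂).1 = S := by
  apply Finset.eq_of_subset_of_card_le
  · intro x hx
    rw [Finset.mem_image] at hx
    obtain ⟨y, hy, rfl⟩ := hx
    rw [frontPos, mem_filter] at hy
    have h := hy.2
    have hy2 : y = pF S ⟨(y:ℕ), h⟩ := by ext; simp [pF]
    rw [hy2, (joinArr_front S d₁ d₂ _).1]
    exact Finset.orderEmbOfFin_mem _ _ _
  · rw [Finset.card_image_of_injective _ (joinArr S d₁ d₂).1.injective,
      card_frontPos (cardS_le S)]

lemma fiber_card (a : Fin n → ℝ) (S : Finset (Fin n)) :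
    (univ.filter (fun d : Arr n => fm a d = S.card ∧ (frontPos n S.card).image d.1 = S)).card
      = Nsm (restr a S) * Nnn (restr a Sᶜ) := by
  rw [Nsm, Nnn, ← Finset.card_product]
  refine Finset.card_bij'
    (fun d hd => (splitA S d (derive_hf S d (((mem_filter.mp hd).2).2)),
                  splitB S d (derive_hb S d (((mem_filter.mp hd).2).2))))
    (fun p _ => joinArr S p.1 p.2) ?_ ?_ ?_ ?_
  · intro d hd
    have hd2 := (mem_filter.mp hd).2
    rw [Finset.mem_product]
    have hiff := (fm_eq_card_iff a S d (derive_hf S d hd2.2) (derive_hb S d hd2.2)).mp hd2.1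
    constructor
    · rw [mem_filter]
      exact ⟨mem_univ _, hiff.1⟩
    · rw [mem_filter]
      exact ⟨mem_univ _, hiff.2⟩
  · intro p hp
    rw [Finset.mem_product, mem_filter, mem_filter] at hp
    rw [mem_filter]
    refine ⟨mem_univ _, ?_, join_image S p.1 p.2⟩
    rw [fm_eq_card_iff a S (joinArr S p.1 p.2)
      (derive_hf S _ (join_image S p.1 p.2)) (derive_hb S _ (join_image S p.1 p.2))]
    rw [split_join_A, split_join_B]
    exact ⟨hp.1.2, hp.2.2⟩
  · intro d hd
    exact join_split S d _ _
  · intro p hp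
    refine Prod.ext ?_ ?_
    · exact split_join_A S p.1 p.2 _
    · exact split_join_B S p.1 p.2 _

lemma card_fm_middle (a : Fin n → ℝ) (k : ℕ) (hk : k ≤ n) :
    (univ.filter (fun d : Arr n => fm a d = k)).card
      = ∑ S ∈ Finset.powersetCard k (univ : Finset (Fin n)),
          Nsm (restr a S) * Nnn (restr a Sᶜ) := by
  rw [Finset.card_eq_sum_card_fiberwise
    (f := fun d : Arr n => (frontPos n k).image d.1) (t := Finset.powersetCard k univ) ?_]
  swap
  · intro d _
    rw [Finset.mem_coe, Finset.mem_powersetCard_univ, Finset.card_image_of_injective _ d.1.injective,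
      card_frontPos hk]
  refine Finset.sum_congr rfl ?_
  intro S hS
  have hcard : S.card = k := Finset.mem_powersetCard_univ.mp hS
  subst hcard
  rw [← fiber_card a S, Finset.filter_filter]

lemma total_identity (a : Fin n → ℝ) :
    (univ : Finset (Arr n)).card
      = ∑ k ∈ range (n+1), (univ.filter (fun d : Arr n => fm a d = k)).card :=
  Finset.card_eq_sum_card_fiberwise (fun d _ => by rw [Finset.mem_coe, mem_range]; have := fm_le a d; omega)

lemma generic_eq : ∀ n (a b : Fin n → ℝ), Generic a → Generic b → Npos a = Npos b := by
  intro n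
  induction n using Nat.strong_induction_on with
  | _ n IH =>
    intro a b ha hb
    rcases Nat.eq_zero_or_pos n with rfl|hn
    · unfold Npos
      have h1 : ∀ (c : Fin 0 → ℝ) (d : Arr 0), isPos c d := by
        intro c d k hk1 hk2
        omega
      rw [Finset.filter_true_of_mem (fun d _ => h1 a d),
        Finset.filter_true_of_mem (fun d _ => h1 b d)]
    · -- rearrange the total identity
      have key : ∀ c : Fin n → ℝ, Generic c →
          (univ : Finset (Arr n)).card = 2 * Npos c
            + ∑ i ∈ range (n-1), ∑ S ∈ Finset.powersetCard (i+1) (univ : Finset (Fin n)),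
                Nsm (restr c S) * Nnn (restr c Sᶜ) := by
        intro c hc
        rw [total_identity c]
        rw [Finset.sum_range_succ']
        have hpeel := Finset.sum_range_succ
          (fun i => (univ.filter (fun d : Arr n => fm c d = i+1)).card) (n-1)
        have hn1 : n - 1 + 1 = n := by omega
        rw [hn1] at hpeel
        rw [hpeel]
        have hz : (univ.filter (fun d : Arr n => fm c d = 0)).card = Npos c := by
          rw [filter_fm_zero]
          exact Nnn_eq_Npos_of_generic hc
        have hnn : (univ.filter (fun d : Arr n => fm c d = n)).card = Npos c := by
          rw [filter_fm_n]
          exact Nsm_eq_Npos c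
        rw [hz, hnn]
        have hmid : ∀ i ∈ range (n-1),
            (univ.filter (fun d : Arr n => fm c d = i+1)).card
              = ∑ S ∈ Finset.powersetCard (i+1) (univ : Finset (Fin n)),
                  Nsm (restr c S) * Nnn (restr c Sᶜ) := by
          intro i hi
          rw [mem_range] at hi
          exact card_fm_middle c (i+1) (by omega)
        rw [Finset.sum_congr rfl hmid]
        ring
      have ka := key a ha
      have kb := key b hb
      have hmideq : ∀ i ∈ range (n-1),
          (∑ S ∈ Finset.powersetCard (i+1) (univ : Finset (Fin n)),
            Nsm (restr a S) * Nnn (restr a Sᶜ))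
          = ∑ S ∈ Finset.powersetCard (i+1) (univ : Finset (Fin n)),
            Nsm (restr b S) * Nnn (restr b Sᶜ) := by
        intro i hi
        rw [mem_range] at hi
        refine Finset.sum_congr rfl ?_
        intro S hS
        have hcard : S.card = i + 1 := Finset.mem_powersetCard_univ.mp hS
        have hccard : Sᶜ.card = n - (i+1) := by
          have := card_compl_add S; omega
        have h1 : Nsm (restr a S) = Nsm (restr b S) := by
          rw [Nsm_eq_Npos, Nsm_eq_Npos]
          exact IH S.card (by omega) _ _ (generic_restr ha S) (generic_restr hb S)
        have h2 : Nnn (restr a Sᶜ) = Nnn (restr b Sᶜ) := by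
          rw [Nnn_eq_Npos_of_generic (generic_restr ha Sᶜ),
            Nnn_eq_Npos_of_generic (generic_restr hb Sᶜ)]
          exact IH Sᶜ.card (by omega) _ _ (generic_restr ha Sᶜ) (generic_restr hb Sᶜ)
        rw [h1, h2]
      rw [Finset.sum_congr rfl hmideq] at ka
      omega

-- ### the main combinatorial inequality
theorem Npos_le_Nnn (a b : Fin n → ℝ) : Npos a ≤ Nnn b := by
  obtain ⟨a', ha'g, ha'1, _⟩ := exists_perturb a
  obtain ⟨b', hb'g, _, hb'2⟩ := exists_perturb b
  have h1 : Npos a ≤ Npos a' := by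
    apply Finset.card_le_card
    intro d hd
    rw [mem_filter] at hd ⊢
    exact ⟨mem_univ _, ha'1 d hd.2⟩
  have h2 : Npos b' ≤ Nnn b := by
    apply Finset.card_le_card
    intro d hd
    rw [mem_filter] at hd ⊢
    exact ⟨mem_univ _, hb'2 d hd.2⟩
  have h3 : Npos a' = Npos b' := generic_eq n a' b' ha'g hb'g
  omega


def Cst (n : ℕ) : ℕ := Npos (gv n)

lemma Npos_le_Cst (a : Fin n → ℝ) : Npos a ≤ Cst n := by
  obtain ⟨a', ha'g, ha'1, _⟩ := exists_perturb a
  have h1 : Npos a ≤ Npos a' := by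
    apply Finset.card_le_card
    intro d hd
    rw [mem_filter] at hd ⊢
    exact ⟨mem_univ _, ha'1 d hd.2⟩
  have h2 : Npos a' = Cst n := generic_eq n a' (gv n) ha'g generic_gv
  omega

lemma Cst_le_Nnn (a : Fin n → ℝ) : Cst n ≤ Nnn a := by
  obtain ⟨a', ha'g, _, ha'2⟩ := exists_perturb a
  have h1 : Npos a' ≤ Nnn a := by
    apply Finset.card_le_card
    intro d hd
    rw [mem_filter] at hd ⊢
    exact ⟨mem_univ _, ha'2 d hd.2⟩
  have h2 : Npos a' = Cst n := generic_eq n a' (gv n) ha'g generic_gv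
  omega

end
end SA

open MeasureTheory ProbabilityTheory
open scoped ENNReal

namespace SA

lemma map_tuple_eq_pi {Ω : Type*} [MeasureSpace Ω] [IsProbabilityMeasure (ℙ : Measure Ω)]
    (X : ℕ → Ω → ℝ × ℝ) (hmeas : ∀ i, Measurable (X i))
    (hind : iIndepFun X ℙ)
    (hid : ∀ i, IdentDistrib (X i) (X 0) ℙ ℙ) (n : ℕ) :
    Measure.map (fun ω (i : Fin n) => X (i : ℕ) ω) ℙ
      = Measure.pi (fun _ : Fin n => Measure.map (X 0) ℙ) := by
  have hY : Measurable (fun ω (i : Fin n) => X (i : ℕ) ω) :=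
    measurable_pi_lambda _ (fun i => hmeas i)
  refine (Measure.pi_eq ?_).symm
  intro s hs
  rw [Measure.map_apply hY (MeasurableSet.univ_pi hs)]
  classical
  set sets : ℕ → Set (ℝ × ℝ) := fun j => if h : j < n then s ⟨j, h⟩ else Set.univ with hsets
  have hpre : (fun ω (i : Fin n) => X (i : ℕ) ω) ⁻¹' (Set.univ.pi s)
      = ⋂ j ∈ Finset.range n, X j ⁻¹' sets j := by
    ext ω
    simp only [Set.mem_preimage, Set.mem_pi, Set.mem_univ, forall_true_left, Set.mem_iInter,
      Finset.mem_range, hsets]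
    constructor
    · intro h j hj
      rw [dif_pos hj]
      exact h ⟨j, hj⟩
    · intro h i
      have h2 := h (i : ℕ) i.is_lt
      rw [dif_pos i.is_lt] at h2
      exact h2
  rw [hpre]
  have hsetsmeas : ∀ j ∈ Finset.range n, MeasurableSet (sets j) := by
    intro j hj
    rw [Finset.mem_range] at hj
    rw [hsets]
    simp only [dif_pos hj]
    exact hs _
  rw [(iIndepFun_iff_measure_inter_preimage_eq_mul.mp hind) (Finset.range n) hsetsmeas]
  rw [← Fin.prod_univ_eq_prod_range (fun j => ℙ (X j ⁻¹' sets j)) n]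
  refine Finset.prod_congr rfl ?_
  intro i _
  have h1 : sets (i : ℕ) = s i := by
    rw [hsets]
    simp only [dif_pos i.is_lt]
  rw [h1, ← Measure.map_apply (hmeas i) (hs i), (hid i).map_eq]


noncomputable section

def negIf (b : Bool) : ℝ × ℝ → ℝ × ℝ := fun p => (p.1, sg b * p.2)

lemma measurable_negIf (b : Bool) : Measurable (negIf b) :=
  measurable_fst.prodMk (measurable_const.mul measurable_snd)

def gmap {n : ℕ} (d : Arr n) : (Fin n → ℝ × ℝ) → (Fin n → ℝ × ℝ) :=
  fun v i => negIf (d.2 i) (v (d.1 i))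

lemma measurable_gmap {n : ℕ} (d : Arr n) : Measurable (gmap d) :=
  measurable_pi_lambda _ fun i => (measurable_negIf _).comp (measurable_pi_apply _)

lemma map_negIf_eq {μ : Measure (ℝ × ℝ)} (hsym : Measure.map (negIf false) μ = μ) (b : Bool) :
    Measure.map (negIf b) μ = μ := by
  cases b
  · exact hsym
  · have hid : negIf true = id := by
      funext p
      simp [negIf, sg]
    rw [hid, Measure.map_id]

lemma gmap_measurePreserving {n : ℕ} (μ : Measure (ℝ × ℝ)) [IsProbabilityMeasure μ]
    (hsym : Measure.map (negIf false) μ = μ) (d : Arr n) :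
    Measure.map (gmap d) (Measure.pi (fun _ : Fin n => μ)) = Measure.pi (fun _ : Fin n => μ) := by
  refine (Measure.pi_eq ?_).symm
  intro s hs
  rw [Measure.map_apply (measurable_gmap d) (MeasurableSet.univ_pi hs)]
  have hpre : gmap d ⁻¹' (Set.univ.pi s)
      = Set.univ.pi (fun j => negIf (d.2 (d.1.symm j)) ⁻¹' s (d.1.symm j)) := by
    ext v
    simp only [Set.mem_preimage, Set.mem_pi, Set.mem_univ, forall_true_left, gmap]
    constructor
    · intro h j
      have h2 := h (d.1.symm j)
      rwa [Equiv.apply_symm_apply] at h2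
    · intro h i
      have h2 := h (d.1 i)
      rwa [Equiv.symm_apply_apply] at h2
  rw [hpre, Measure.pi_pi]
  have hterm : ∀ j, μ (negIf (d.2 (d.1.symm j)) ⁻¹' s (d.1.symm j)) = μ (s (d.1.symm j)) := by
    intro j
    rw [← Measure.map_apply (measurable_negIf _) (hs _), map_negIf_eq hsym _]
  rw [Finset.prod_congr rfl (fun j _ => hterm j)]
  exact Equiv.prod_comp d.1.symm (fun j => μ (s j))

def idArr (n : ℕ) : Arr n := (Equiv.refl _, fun _ => true)

def SetA (n : ℕ) (B : Set ℝ) : Set (Fin n → ℝ × ℝ) := {v | (∑ i, (v i).1) ∈ B}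
def SetE {n : ℕ} (d : Arr n) : Set (Fin n → ℝ × ℝ) := {v | isPos (fun i => (v i).2) d}
def SetF {n : ℕ} (d : Arr n) : Set (Fin n → ℝ × ℝ) := {v | isNn (fun i => (v i).2) d}

lemma measurable_psum {n : ℕ} (d : Arr n) (k : ℕ) :
    Measurable (fun v : Fin n → ℝ × ℝ => psum (fun i => (v i).2) d k) := by
  unfold psum
  apply Finset.measurable_sum
  intro i _
  exact measurable_const.mul ((measurable_pi_apply _).snd)

lemma measA {n : ℕ} {B : Set ℝ} (hB : MeasurableSet B) : MeasurableSet (SetA n B) := by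
  have h : Measurable (fun v : Fin n → ℝ × ℝ => ∑ i, (v i).1) :=
    Finset.measurable_sum _ (fun i _ => (measurable_pi_apply i).fst)
  exact h hB

lemma measE {n : ℕ} (d : Arr n) : MeasurableSet (SetE d) := by
  have h : SetE d = ⋂ (k : ℕ), ⋂ (_ : 1 ≤ k), ⋂ (_ : k ≤ n),
      {v : Fin n → ℝ × ℝ | 0 < psum (fun i => (v i).2) d k} := by
    ext v
    simp only [SetE, Set.mem_setOf_eq, Set.mem_iInter, isPos]
  rw [h]
  exact MeasurableSet.iInter fun k => MeasurableSet.iInter fun _ => MeasurableSet.iInter fun _ =>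
    measurableSet_lt measurable_const (measurable_psum d k)

lemma measF {n : ℕ} (d : Arr n) : MeasurableSet (SetF d) := by
  have h : SetF d = ⋂ (k : ℕ), ⋂ (_ : 1 ≤ k), ⋂ (_ : k ≤ n),
      {v : Fin n → ℝ × ℝ | 0 ≤ psum (fun i => (v i).2) d k} := by
    ext v
    simp only [SetF, Set.mem_setOf_eq, Set.mem_iInter, isNn]
  rw [h]
  exact MeasurableSet.iInter fun k => MeasurableSet.iInter fun _ => MeasurableSet.iInter fun _ =>
    measurableSet_le measurable_const (measurable_psum d k)

lemma gmap_psum {n : ℕ} (d : Arr n) (v : Fin n → ℝ × ℝ) (k : ℕ) :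
    psum (fun i => ((gmap d v) i).2) (idArr n) k = psum (fun i => (v i).2) d k := by
  unfold psum gmap negIf idArr
  refine Finset.sum_congr rfl ?_
  intro i _
  by_cases h : d.2 i = true <;> simp [sg, h]

lemma gmap_preimage_A {n : ℕ} (d : Arr n) (B : Set ℝ) :
    gmap d ⁻¹' (SetA n B) = SetA n B := by
  ext v
  simp only [Set.mem_preimage, SetA, Set.mem_setOf_eq, gmap, negIf]
  rw [Equiv.sum_comp d.1 (fun j => (v j).1)]

lemma gmap_preimage_E {n : ℕ} (d : Arr n) :
    gmap d ⁻¹' (SetE (idArr n)) = SetE d := by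
  ext v
  simp only [Set.mem_preimage, SetE, Set.mem_setOf_eq, isPos]
  constructor
  · intro h k hk1 hk2
    have h2 := h k hk1 hk2
    rwa [gmap_psum d v k] at h2
  · intro h k hk1 hk2
    rw [gmap_psum d v k]
    exact h k hk1 hk2

lemma gmap_preimage_F {n : ℕ} (d : Arr n) :
    gmap d ⁻¹' (SetF (idArr n)) = SetF d := by
  ext v
  simp only [Set.mem_preimage, SetF, Set.mem_setOf_eq, isNn]
  constructor
  · intro h k hk1 hk2
    have h2 := h k hk1 hk2
    rwa [gmap_psum d v k] at h2
  · intro h k hk1 hk2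
    rw [gmap_psum d v k]
    exact h k hk1 hk2


variable {n : ℕ}

lemma sum_indicator_E_le {B : Set ℝ} (v : Fin n → ℝ × ℝ) :
    (∑ d : Arr n, (SetA n B ∩ SetE d).indicator (fun _ => (1:ℝ≥0∞)) v)
      ≤ (SetA n B).indicator (fun _ => (Cst n : ℝ≥0∞)) v := by
  classical
  by_cases hv : v ∈ SetA n B
  · rw [Set.indicator_of_mem hv]
    have h1 : ∀ d : Arr n, (SetA n B ∩ SetE d).indicator (fun _ => (1:ℝ≥0∞)) v
        = if isPos (fun i => (v i).2) d then 1 else 0 := by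
      intro d
      rw [Set.indicator_apply]
      congr 1
      simp only [Set.mem_inter_iff, hv, true_and]
      rfl
    rw [Finset.sum_congr rfl (fun d _ => h1 d)]
    have h2 : (∑ d : Arr n, if isPos (fun i => (v i).2) d then (1:ℝ≥0∞) else 0)
        = ((Npos (fun i => (v i).2) : ℕ) : ℝ≥0∞) := by
      rw [Npos, Finset.card_filter, Nat.cast_sum]
      refine Finset.sum_congr rfl ?_
      intro d _
      by_cases h : isPos (fun i => (v i).2) d <;> simp [h]
    rw [h2]
    exact_mod_cast Nat.cast_le.mpr (Npos_le_Cst _)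
  · rw [Set.indicator_of_notMem hv]
    have h1 : ∀ d : Arr n, (SetA n B ∩ SetE d).indicator (fun _ => (1:ℝ≥0∞)) v = 0 :=
      fun d => Set.indicator_of_notMem (fun hmem => hv hmem.1) _
    rw [Finset.sum_congr rfl (fun d _ => h1 d)]
    simp

lemma sum_indicator_F_ge (v : Fin n → ℝ × ℝ) :
    (Cst n : ℝ≥0∞) ≤ ∑ d : Arr n, (SetF d).indicator (fun _ => (1:ℝ≥0∞)) v := by
  classical
  have h1 : ∀ d : Arr n, (SetF d).indicator (fun _ => (1:ℝ≥0∞)) v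
      = if isNn (fun i => (v i).2) d then 1 else 0 := by
    intro d
    rw [Set.indicator_apply]
    congr 1
  rw [Finset.sum_congr rfl (fun d _ => h1 d)]
  have h2 : (∑ d : Arr n, if isNn (fun i => (v i).2) d then (1:ℝ≥0∞) else 0)
      = ((Nnn (fun i => (v i).2) : ℕ) : ℝ≥0∞) := by
    rw [Nnn, Finset.card_filter, Nat.cast_sum]
    refine Finset.sum_congr rfl ?_
    intro d _
    by_cases h : isNn (fun i => (v i).2) d <;> simp [h]
  rw [h2]
  exact_mod_cast Nat.cast_le.mpr (Cst_le_Nnn _)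

lemma sum_meas_E_le (ν : Measure (Fin n → ℝ × ℝ)) {B : Set ℝ} (hB : MeasurableSet B) :
    ∑ d : Arr n, ν (SetA n B ∩ SetE d) ≤ (Cst n : ℝ≥0∞) * ν (SetA n B) := by
  have hmeas : ∀ d : Arr n, MeasurableSet (SetA n B ∩ SetE d) :=
    fun d => (measA hB).inter (measE d)
  calc ∑ d : Arr n, ν (SetA n B ∩ SetE d)
      = ∑ d : Arr n, ∫⁻ v, (SetA n B ∩ SetE d).indicator (fun _ => (1:ℝ≥0∞)) v ∂ν := by
        refine Finset.sum_congr rfl ?_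
        intro d _
        rw [MeasureTheory.lintegral_indicator_const (hmeas d), one_mul]
    _ = ∫⁻ v, ∑ d : Arr n, (SetA n B ∩ SetE d).indicator (fun _ => (1:ℝ≥0∞)) v ∂ν := by
        rw [MeasureTheory.lintegral_finset_sum]
        intro d _
        exact measurable_const.indicator (hmeas d)
    _ ≤ ∫⁻ v, (SetA n B).indicator (fun _ => (Cst n : ℝ≥0∞)) v ∂ν :=
        MeasureTheory.lintegral_mono (fun v => sum_indicator_E_le v)
    _ = (Cst n : ℝ≥0∞) * ν (SetA n B) := MeasureTheory.lintegral_indicator_const (measA hB) _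

lemma sum_meas_F_ge (ν : Measure (Fin n → ℝ × ℝ)) [IsProbabilityMeasure ν] :
    (Cst n : ℝ≥0∞) ≤ ∑ d : Arr n, ν (SetF d) := by
  calc (Cst n : ℝ≥0∞) = ∫⁻ _, (Cst n : ℝ≥0∞) ∂ν := by
        rw [MeasureTheory.lintegral_const, measure_univ, mul_one]
    _ ≤ ∫⁻ v, ∑ d : Arr n, (SetF d).indicator (fun _ => (1:ℝ≥0∞)) v ∂ν :=
        MeasureTheory.lintegral_mono (fun v => sum_indicator_F_ge v)
    _ = ∑ d : Arr n, ∫⁻ v, (SetF d).indicator (fun _ => (1:ℝ≥0∞)) v ∂ν := by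
        rw [MeasureTheory.lintegral_finset_sum]
        intro d _
        exact measurable_const.indicator (measF d)
    _ = ∑ d : Arr n, ν (SetF d) := by
        refine Finset.sum_congr rfl ?_
        intro d _
        rw [MeasureTheory.lintegral_indicator_const (measF d), one_mul]

end
end SA

open MeasureTheory ProbabilityTheory Filter Real Topology
open scoped ENNReal

/-- The bivariate random walk built from i.i.d. `ℝ²`-valued increments. -/
noncomputable def walk2 {Ω : Type*} (X : ℕ → Ω → ℝ × ℝ) (n : ℕ) (ω : Ω) : ℝ × ℝ :=
  ∑ i ∈ Finset.range n, X i ω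

/-- `X` is an i.i.d. sequence of `ℝ²`-valued random vectors. -/
def IsIIDSeq2 {Ω : Type*} [MeasureSpace Ω] (X : ℕ → Ω → ℝ × ℝ) : Prop :=
  (∀ i, Measurable (X i)) ∧ iIndepFun X ℙ ∧
    ∀ i, IdentDistrib (X i) (X 0) ℙ ℙ

lemma walk2_fst {Ω : Type*} (X : ℕ → Ω → ℝ × ℝ) (n : ℕ) (ω : Ω) :
    (walk2 X n ω).1 = ∑ i : Fin n, (X (i:ℕ) ω).1 := by
  unfold walk2
  rw [Prod.fst_sum, Fin.sum_univ_eq_sum_range (fun j => (X j ω).1) n]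

lemma walk2_snd_psum {Ω : Type*} (X : ℕ → Ω → ℝ × ℝ) {n k : ℕ} (hk : k ≤ n) (ω : Ω) :
    SA.psum (fun i : Fin n => (X (i:ℕ) ω).2) (SA.idArr n) k = (walk2 X k ω).2 := by
  unfold walk2 SA.psum SA.idArr
  rw [Prod.snd_sum]
  refine Finset.sum_bij' (fun (i : Fin n) _ => (i:ℕ))
    (fun j hj => (⟨j, lt_of_lt_of_le (Finset.mem_range.mp hj) hk⟩ : Fin n)) ?_ ?_ ?_ ?_ ?_
  · intro i hi
    simp only [Finset.mem_filter, Finset.mem_univ, true_and] at hi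
    simpa using hi
  · intro j hj
    simp only [Finset.mem_range] at hj
    simp only [Finset.mem_filter, Finset.mem_univ, true_and]
    simpa using hj
  · intro i _
    ext; simp
  · intro j _
    simp
  · intro i _
    simp [SA.sg]

/-- **Proposition 3, inequality (indep2).** For a bivariate random walk whose increment
`(X¹, X²)` is distributed as `(X¹, -X²)`,
`P(Sₙ¹ ∈ B, min_{1≤i≤n} Sᵢ² > 0) ≤ P(Sₙ¹ ∈ B) P(min_{1≤i≤n} Sᵢ² ≥ 0)`. -/
theorem bivariate_halfplane_upper_bound
    {Ω : Type*} [MeasureSpace Ω] [IsProbabilityMeasure (ℙ : Measure Ω)]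
    (X : ℕ → Ω → ℝ × ℝ) (hX : IsIIDSeq2 X)
    (hsymm : IdentDistrib (X 0) (fun ω => ((X 0 ω).1, -(X 0 ω).2)) ℙ ℙ) :
    ∀ n : ℕ, 1 ≤ n → ∀ B : Set ℝ, MeasurableSet B →
      ℙ {ω | (walk2 X n ω).1 ∈ B ∧ ∀ i ∈ Finset.Icc 1 n, 0 < (walk2 X i ω).2} ≤
        ℙ {ω | (walk2 X n ω).1 ∈ B} *
          ℙ {ω | ∀ i ∈ Finset.Icc 1 n, 0 ≤ (walk2 X i ω).2} := by
  obtain ⟨hmeas, hind, hid⟩ := hX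
  intro n hn B hB
  classical
  set μ : Measure (ℝ × ℝ) := Measure.map (X 0) ℙ with hμdef
  have hμprob : IsProbabilityMeasure μ := Measure.isProbabilityMeasure_map (hmeas 0).aemeasurable
  set ν : Measure (Fin n → ℝ × ℝ) := Measure.pi (fun _ : Fin n => μ) with hνdef
  have hνprob : IsProbabilityMeasure ν := by
    rw [hνdef]
    infer_instance
  set Y : Ω → (Fin n → ℝ × ℝ) := fun ω (i : Fin n) => X (i:ℕ) ω with hYdef
  have hYmeas : Measurable Y := measurable_pi_lambda _ (fun i => hmeas _)
  have hmap : Measure.map Y ℙ = ν := SA.map_tuple_eq_pi X hmeas hind hid n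
  have hsym : Measure.map (SA.negIf false) μ = μ := by
    have h1 : Measure.map (fun ω => ((X 0 ω).1, -(X 0 ω).2)) ℙ
        = Measure.map (SA.negIf false ∘ X 0) ℙ := by
      congr 1
      funext ω
      simp [SA.negIf, SA.sg]
    have h2 := hsymm.map_eq
    rw [h1, ← Measure.map_map (SA.measurable_negIf false) (hmeas 0)] at h2
    exact h2.symm
  -- event identifications
  have hEvAE : {ω | (walk2 X n ω).1 ∈ B ∧ ∀ i ∈ Finset.Icc 1 n, 0 < (walk2 X i ω).2}
      = Y ⁻¹' (SA.SetA n B ∩ SA.SetE (SA.idArr n)) := by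
    ext ω
    simp only [Set.mem_setOf_eq, Set.mem_preimage, Set.mem_inter_iff, SA.SetA, SA.SetE,
      SA.isPos, hYdef, Finset.mem_Icc]
    rw [walk2_fst]
    constructor
    · rintro ⟨h1, h2⟩
      refine ⟨h1, ?_⟩
      intro k hk1 hk2
      rw [walk2_snd_psum X hk2 ω]
      exact h2 k ⟨hk1, hk2⟩
    · rintro ⟨h1, h2⟩
      refine ⟨h1, ?_⟩
      intro k hk
      have h3 := h2 k hk.1 hk.2
      rwa [walk2_snd_psum X hk.2 ω] at h3
  have hEvA : {ω | (walk2 X n ω).1 ∈ B} = Y ⁻¹' (SA.SetA n B) := by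
    ext ω
    simp only [Set.mem_setOf_eq, Set.mem_preimage, SA.SetA, hYdef]
    rw [walk2_fst]
  have hEvF : {ω | ∀ i ∈ Finset.Icc 1 n, 0 ≤ (walk2 X i ω).2}
      = Y ⁻¹' (SA.SetF (SA.idArr n)) := by
    ext ω
    simp only [Set.mem_setOf_eq, Set.mem_preimage, SA.SetF, SA.isNn, hYdef, Finset.mem_Icc]
    constructor
    · intro h2 k hk1 hk2
      rw [walk2_snd_psum X hk2 ω]
      exact h2 k ⟨hk1, hk2⟩
    · intro h2 k hk
      have h3 := h2 k hk.1 hk.2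
      rwa [walk2_snd_psum X hk.2 ω] at h3
  have hP : ∀ T : Set (Fin n → ℝ × ℝ), MeasurableSet T → ℙ (Y ⁻¹' T) = ν T := by
    intro T hT
    rw [← hmap, Measure.map_apply hYmeas hT]
  -- invariance under signed permutations
  have hinvE : ∀ d : SA.Arr n, ν (SA.SetA n B ∩ SA.SetE d)
      = ν (SA.SetA n B ∩ SA.SetE (SA.idArr n)) := by
    intro d
    have h0 := SA.gmap_measurePreserving μ hsym d
    have h1 : ν (SA.SetA n B ∩ SA.SetE (SA.idArr n))
        = ν (SA.gmap d ⁻¹' (SA.SetA n B ∩ SA.SetE (SA.idArr n))) := by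
      conv_lhs => rw [hνdef, ← h0]
      rw [Measure.map_apply (SA.measurable_gmap d) ((SA.measA hB).inter (SA.measE _))]
    rw [Set.preimage_inter, SA.gmap_preimage_A, SA.gmap_preimage_E] at h1
    exact h1.symm
  have hinvF : ∀ d : SA.Arr n, ν (SA.SetF d) = ν (SA.SetF (SA.idArr n)) := by
    intro d
    have h0 := SA.gmap_measurePreserving μ hsym d
    have h1 : ν (SA.SetF (SA.idArr n)) = ν (SA.gmap d ⁻¹' (SA.SetF (SA.idArr n))) := by
      conv_lhs => rw [hνdef, ← h0]
      rw [Measure.map_apply (SA.measurable_gmap d) (SA.measF _)]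
    rw [SA.gmap_preimage_F] at h1
    exact h1.symm
  set m : ℕ := Fintype.card (SA.Arr n) with hmdef
  have hsumE : (m : ℝ≥0∞) * ν (SA.SetA n B ∩ SA.SetE (SA.idArr n))
      = ∑ d : SA.Arr n, ν (SA.SetA n B ∩ SA.SetE d) := by
    rw [Finset.sum_congr rfl (fun d _ => hinvE d), Finset.sum_const, Finset.card_univ,
      nsmul_eq_mul, hmdef]
  have hsumF : (m : ℝ≥0∞) * ν (SA.SetF (SA.idArr n)) = ∑ d : SA.Arr n, ν (SA.SetF d) := by
    rw [Finset.sum_congr rfl (fun d _ => hinvF d), Finset.sum_const, Finset.card_univ,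
      nsmul_eq_mul, hmdef]
  have key1 : (m : ℝ≥0∞) * ν (SA.SetA n B ∩ SA.SetE (SA.idArr n))
      ≤ (SA.Cst n : ℝ≥0∞) * ν (SA.SetA n B) := by
    rw [hsumE]
    exact SA.sum_meas_E_le ν hB
  have key2 : (SA.Cst n : ℝ≥0∞) ≤ (m : ℝ≥0∞) * ν (SA.SetF (SA.idArr n)) := by
    rw [hsumF]
    exact SA.sum_meas_F_ge ν
  rw [hEvAE, hEvA, hEvF, hP _ ((SA.measA hB).inter (SA.measE _)), hP _ (SA.measA hB),
    hP _ (SA.measF _)]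
  have hm0 : (m : ℝ≥0∞) ≠ 0 := Nat.cast_ne_zero.mpr Fintype.card_ne_zero
  have hmtop : (m : ℝ≥0∞) ≠ ⊤ := ENNReal.natCast_ne_top m
  have chain : ((m : ℝ≥0∞) * m) * ν (SA.SetA n B ∩ SA.SetE (SA.idArr n))
      ≤ ((m : ℝ≥0∞) * m) * (ν (SA.SetA n B) * ν (SA.SetF (SA.idArr n))) := by
    calc ((m : ℝ≥0∞) * m) * ν (SA.SetA n B ∩ SA.SetE (SA.idArr n))
        = (m : ℝ≥0∞) * ((m : ℝ≥0∞) * ν (SA.SetA n B ∩ SA.SetE (SA.idArr n))) := by ring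
      _ ≤ (m : ℝ≥0∞) * ((SA.Cst n : ℝ≥0∞) * ν (SA.SetA n B)) := mul_le_mul_right key1 _
      _ = (SA.Cst n : ℝ≥0∞) * ((m : ℝ≥0∞) * ν (SA.SetA n B)) := by ring
      _ ≤ ((m : ℝ≥0∞) * ν (SA.SetF (SA.idArr n))) * ((m : ℝ≥0∞) * ν (SA.SetA n B)) :=
          mul_le_mul_left key2 _
      _ = ((m : ℝ≥0∞) * m) * (ν (SA.SetA n B) * ν (SA.SetF (SA.idArr n))) := by ring
  exact (ENNReal.mul_le_mul_iff_right (mul_ne_zero hm0 hm0) (ENNReal.mul_ne_top hmtop hmtop)).mp chain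
end

section
/- Let S_n be a non-degenerate centered random walk (E S_1 = 0). Then for every N ≥ 1: P(min_{1≤k≤N} A_k > 0) = P(min_{1≤k≤η(N)} A_{Θ_k} > 0, A_1 > 0, A_N > 0), where the minimum over an empty index set (η(N) = 0) is interpreted as +∞ (so that condition holds vacuously). -/
open MeasureTheory ProbabilityTheory Filter Real Topology
open scoped ENNReal

/-- The random walk `S n = X 1 + ⋯ + X n` built from the increments `X 0, X 1, …`. -/
noncomputable def walk {Ω : Type*} (X : ℕ → Ω → ℝ) (n : ℕ) (ω : Ω) : ℝ :=
  ∑ i ∈ Finset.range n, X i ω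

/-- The integrated random walk `A n = S 1 + ⋯ + S n`. -/
noncomputable def area {Ω : Type*} (X : ℕ → Ω → ℝ) (n : ℕ) (ω : Ω) : ℝ :=
  ∑ k ∈ Finset.range n, walk X (k + 1) ω

/-- `X` is an i.i.d. sequence of (measurable) random variables. -/
def IsIIDSeq {Ω : Type*} [MeasureSpace Ω] (X : ℕ → Ω → ℝ) : Prop :=
  (∀ i, Measurable (X i)) ∧ iIndepFun X ℙ ∧
    ∀ i, IdentDistrib (X i) (X 0) ℙ ℙ

/-- The walk is right-exponential: `P(S₁ > x | S₁ > 0) = e^{-a x}` for some `a > 0`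
and all `x > 0`. -/
def IsRightExponential {Ω : Type*} [MeasureSpace Ω] (X : ℕ → Ω → ℝ) : Prop :=
  ∃ a : ℝ, 0 < a ∧ ∀ x : ℝ, 0 < x →
    (ℙ[|{ω | 0 < X 0 ω}]) {ω | x < X 0 ω} = ENNReal.ofReal (Real.exp (-(a * x)))

/-- The walk is right-continuous (skip free): it is integer-valued and
`P(S₁ = 1 | S₁ > 0) = 1`. -/
def IsRightContinuous {Ω : Type*} [MeasureSpace Ω] (X : ℕ → Ω → ℝ) : Prop :=
  (∀ᵐ ω ∂(ℙ : Measure Ω), ∃ k : ℤ, X 0 ω = k) ∧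
    (ℙ[|{ω | 0 < X 0 ω}]) {ω | X 0 ω = 1} = 1

/-- The crossing times of the zero level from below: `Θ_0 = min {n ≥ 0 : S_{n+1} > 0}` and
`Θ_{k+1} = min {n > Θ_k : S_n ≤ 0, S_{n+1} > 0}`. -/
noncomputable def crossTime {Ω : Type*} (X : ℕ → Ω → ℝ) : ℕ → Ω → ℕ
  | 0 => fun ω => sInf {n | 0 < walk X (n + 1) ω}
  | k + 1 => fun ω =>
      sInf {n | crossTime X k ω < n ∧ walk X n ω ≤ 0 ∧ 0 < walk X (n + 1) ω}

/-- The length `θ_k = Θ_k - Θ_{k-1}` of the `k`-th cycle. -/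
noncomputable def cycleLen {Ω : Type*} (X : ℕ → Ω → ℝ) (k : ℕ) (ω : Ω) : ℕ :=
  crossTime X k ω - crossTime X (k - 1) ω

/-- The area `ψ_k = A_{Θ_k} - A_{Θ_{k-1}}` of the `k`-th cycle. -/
noncomputable def cycleArea {Ω : Type*} (X : ℕ → Ω → ℝ) (k : ℕ) (ω : Ω) : ℝ :=
  area X (crossTime X k ω) ω - area X (crossTime X (k - 1) ω) ω

/-- The number `η(N) = max {n ≥ 0 : Θ_n ≤ N}` of complete cycles before time `N`. -/
noncomputable def eta {Ω : Type*} (X : ℕ → Ω → ℝ) (N : ℕ) (ω : Ω) : ℕ :=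
  sSup {n | crossTime X n ω ≤ N}


set_option linter.unusedSectionVars false

section Det

variable {Ω : Type*} (X : ℕ → Ω → ℝ) (ω : Ω)

lemma walk_zero : walk X 0 ω = 0 := by simp [walk]

lemma area_one : area X 1 ω = walk X 1 ω := by simp [area]

lemma area_succ (n : ℕ) : area X (n + 1) ω = area X n ω + walk X (n + 1) ω := by
  simp [area, Finset.sum_range_succ]

lemma area_sub {m n : ℕ} (h : m ≤ n) :
    area X n ω - area X m ω = ∑ j ∈ Finset.Ico m n, walk X (j + 1) ω := by
  rw [Finset.sum_Ico_eq_sub _ h]; rfl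

variable (hosc : ∀ m, ∃ n, m < n ∧ walk X n ω ≤ 0 ∧ 0 < walk X (n + 1) ω)
include hosc

lemma crossTime_succ_mem (k : ℕ) :
    crossTime X k ω < crossTime X (k + 1) ω ∧ walk X (crossTime X (k + 1) ω) ω ≤ 0 ∧
      0 < walk X (crossTime X (k + 1) ω + 1) ω := by
  have hne : {n | crossTime X k ω < n ∧ walk X n ω ≤ 0 ∧ 0 < walk X (n + 1) ω}.Nonempty := by
    obtain ⟨n, hn⟩ := hosc (crossTime X k ω)
    exact ⟨n, hn⟩
  exact Nat.sInf_mem hne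

lemma crossTime_strictMono : StrictMono (fun k => crossTime X k ω) :=
  strictMono_nat_of_lt_succ fun k => (crossTime_succ_mem X ω hosc k).1

lemma self_le_crossTime (k : ℕ) : k ≤ crossTime X k ω :=
  (crossTime_strictMono X ω hosc).le_apply

lemma walk_crossTime_add_one_pos (k : ℕ) : 0 < walk X (crossTime X k ω + 1) ω := by
  cases k with
  | zero =>
    have hne : {n | 0 < walk X (n + 1) ω}.Nonempty := by
      obtain ⟨n, hn⟩ := hosc 0
      exact ⟨n, hn.2.2⟩
    exact Nat.sInf_mem hne
  | succ k => exact (crossTime_succ_mem X ω hosc k).2.2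

lemma no_cross_between {k n : ℕ} (h1 : crossTime X k ω < n) (h2 : n < crossTime X (k + 1) ω) :
    ¬(walk X n ω ≤ 0 ∧ 0 < walk X (n + 1) ω) := by
  intro hn
  exact Nat.notMem_of_lt_sInf h2 ⟨h1, hn⟩

/-- After the walk goes nonpositive inside a cycle, it stays nonpositive till the end. -/
lemma nonpos_segment {k j0 i : ℕ} (hj0 : crossTime X k ω < j0) (hj0n : walk X j0 ω ≤ 0)
    (hji : j0 ≤ i) (hi : i ≤ crossTime X (k + 1) ω) : walk X i ω ≤ 0 := by
  by_contra hpos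
  push_neg at hpos
  set E : Set ℕ := {i | j0 ≤ i ∧ i ≤ crossTime X (k + 1) ω ∧ 0 < walk X i ω} with hE
  have hEne : E.Nonempty := ⟨i, hji, hi, hpos⟩
  have hmem := Nat.sInf_mem hEne
  set i0 := sInf E with hi0
  obtain ⟨hi0j, hi0le, hi0pos⟩ := hmem
  have hi0ne : j0 ≠ i0 := by
    intro h; rw [← h] at hi0pos; linarith
  have hi0gt : j0 < i0 := lt_of_le_of_ne hi0j hi0ne
  have h1le : 1 ≤ i0 := by omega
  have hnotmem : i0 - 1 ∉ E := Nat.notMem_of_lt_sInf (by omega)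
  have hprev : walk X (i0 - 1) ω ≤ 0 := by
    by_contra hp
    push_neg at hp
    exact hnotmem ⟨by omega, by omega, hp⟩
  have := no_cross_between X ω hosc (k := k) (n := i0 - 1) (by omega) (by omega)
  apply this
  constructor
  · exact hprev
  · have : i0 - 1 + 1 = i0 := by omega
    rw [this]; exact hi0pos

/-- Unimodality bound within a cycle. -/
lemma area_cycle_bound {k n n' : ℕ} (h1 : crossTime X k ω < n) (h2 : n ≤ n')
    (h3 : n' ≤ crossTime X (k + 1) ω) :
    min (area X (crossTime X k ω + 1) ω) (area X n' ω) ≤ area X n ω := by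
  by_cases hall : ∀ j, crossTime X k ω < j → j ≤ n → 0 < walk X j ω
  · -- increasing segment
    have hge : area X (crossTime X k ω + 1) ω ≤ area X n ω := by
      have hle : crossTime X k ω + 1 ≤ n := h1
      have := area_sub X ω hle
      have hsum : 0 ≤ ∑ j ∈ Finset.Ico (crossTime X k ω + 1) n, walk X (j + 1) ω := by
        apply Finset.sum_nonneg
        intro j hj
        rw [Finset.mem_Ico] at hj
        exact le_of_lt (hall (j + 1) (by omega) (by omega))
      linarith
    exact le_trans (min_le_left _ _) hge
  · push_neg at hall
    obtain ⟨j0, hj0gt, hj0le, hj0np⟩ := hall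
    have hge : area X n' ω ≤ area X n ω := by
      have := area_sub X ω h2
      have hsum : ∑ j ∈ Finset.Ico n n', walk X (j + 1) ω ≤ 0 := by
        apply Finset.sum_nonpos
        intro j hj
        rw [Finset.mem_Ico] at hj
        exact nonpos_segment X ω hosc hj0gt hj0np (by omega) (by omega)
      linarith
    exact le_trans (min_le_right _ _) hge

lemma crossTime_zero_of_pos (hS1 : 0 < walk X 1 ω) : crossTime X 0 ω = 0 := by
  have : (0 : ℕ) ∈ {n | 0 < walk X (n + 1) ω} := hS1
  simp only [crossTime]
  exact Nat.sInf_eq_zero.mpr (Or.inl this)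

lemma eta_spec {N : ℕ} (hΘ0 : crossTime X 0 ω = 0) :
    crossTime X (eta X N ω) ω ≤ N ∧ N < crossTime X (eta X N ω + 1) ω := by
  set s : Set ℕ := {n | crossTime X n ω ≤ N} with hs
  have hbdd : BddAbove s := by
    refine ⟨N, fun n hn => ?_⟩
    exact le_trans (self_le_crossTime X ω hosc n) hn
  have hne : s.Nonempty := ⟨0, by simp [hs, hΘ0]⟩
  constructor
  · exact Nat.sSup_mem hne hbdd
  · by_contra h
    push_neg at h
    have : eta X N ω + 1 ≤ eta X N ω := le_csSup hbdd h
    omega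

theorem det_iff (N : ℕ) (hN : 1 ≤ N) :
    (∀ k ∈ Finset.Icc 1 N, 0 < area X k ω) ↔
      ((∀ k, 1 ≤ k → k ≤ eta X N ω → 0 < area X (crossTime X k ω) ω) ∧
        0 < area X 1 ω ∧ 0 < area X N ω) := by
  have hmono := crossTime_strictMono X ω hosc
  constructor
  · intro h
    have hA1 : 0 < area X 1 ω := h 1 (by simp [hN])
    have hS1 : 0 < walk X 1 ω := by rwa [area_one] at hA1
    have hΘ0 : crossTime X 0 ω = 0 := crossTime_zero_of_pos X ω hosc hS1
    obtain ⟨hηle, hηlt⟩ := eta_spec X ω hosc (N := N) hΘ0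
    refine ⟨?_, hA1, h N (by simp [hN])⟩
    intro k hk1 hkη
    apply h
    rw [Finset.mem_Icc]
    constructor
    · exact le_trans hk1 (self_le_crossTime X ω hosc k)
    · exact le_trans (hmono.monotone hkη) hηle
  · rintro ⟨hcyc, hA1, hAN⟩
    intro n hn
    rw [Finset.mem_Icc] at hn
    have hS1 : 0 < walk X 1 ω := by rwa [area_one] at hA1
    have hΘ0 : crossTime X 0 ω = 0 := crossTime_zero_of_pos X ω hosc hS1
    obtain ⟨hηle, hηlt⟩ := eta_spec X ω hosc (N := N) hΘ0
    set η := eta X N ω with hη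
    have hApos : ∀ k, k ≤ η → 0 < area X (crossTime X k ω + 1) ω := by
      intro k hk
      cases k with
      | zero => rw [hΘ0]; exact hA1
      | succ j =>
        rw [area_succ]
        have h1 := hcyc (j + 1) (by omega) hk
        have h2 := walk_crossTime_add_one_pos X ω hosc (j + 1)
        linarith
    rcases le_or_gt n (crossTime X η ω) with hcase | hcase
    · -- inside a complete cycle
      set s2 : Set ℕ := {j | crossTime X j ω < n} with hs2
      have hne2 : s2.Nonempty := ⟨0, by simp [hs2, hΘ0]; omega⟩
      have hbdd2 : BddAbove s2 := by
        refine ⟨n, fun j hj => ?_⟩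
        exact le_trans (self_le_crossTime X ω hosc j) (le_of_lt hj)
      set k := sSup s2 with hk
      have hkmem : crossTime X k ω < n := Nat.sSup_mem hne2 hbdd2
      have hknot : ¬ crossTime X (k + 1) ω < n := by
        intro hlt
        have : k + 1 ≤ k := le_csSup hbdd2 hlt
        omega
      push_neg at hknot
      have hkη : k < η := by
        by_contra hge
        push_neg at hge
        have : crossTime X η ω ≤ crossTime X k ω := hmono.monotone hge
        omega
      have hbound := area_cycle_bound X ω hosc (k := k) (n := n) (n' := crossTime X (k + 1) ω)
        hkmem hknot le_rfl
      have hp1 : 0 < area X (crossTime X k ω + 1) ω := hApos k (by omega)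
      have hp2 : 0 < area X (crossTime X (k + 1) ω) ω := hcyc (k + 1) (by omega) (by omega)
      calc (0:ℝ) < min (area X (crossTime X k ω + 1) ω) (area X (crossTime X (k + 1) ω) ω) :=
            lt_min hp1 hp2
        _ ≤ area X n ω := hbound
    · -- in the last incomplete cycle
      have hbound := area_cycle_bound X ω hosc (k := η) (n := n) (n' := N)
        hcase hn.2 (le_of_lt hηlt)
      have hp1 : 0 < area X (crossTime X η ω + 1) ω := hApos η le_rfl
      calc (0:ℝ) < min (area X (crossTime X η ω + 1) ω) (area X N ω) := lt_min hp1 hAN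
        _ ≤ area X n ω := hbound

end Det

section Helpers

lemma measurable_real_iSup {Ω : Type*} {m : MeasurableSpace Ω} {f : ℕ → Ω → ℝ}
    (hf : ∀ n, Measurable[m] (f n)) : Measurable[m] (fun ω => ⨆ n, f n ω) := by
  apply measurable_of_Iic
  intro c
  have h1 : MeasurableSet[m] {ω | ∃ b : ℕ, ∀ n, f n ω ≤ (b : ℝ)} := by
    have : {ω | ∃ b : ℕ, ∀ n, f n ω ≤ (b : ℝ)} = ⋃ b : ℕ, ⋂ n, {ω | f n ω ≤ (b : ℝ)} := by
      ext ω; simp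
    rw [this]
    exact MeasurableSet.iUnion fun b => MeasurableSet.iInter fun n =>
      measurableSet_le (hf n) measurable_const
  have hset : (fun ω => ⨆ n, f n ω) ⁻¹' Set.Iic c =
      ({ω | ∃ b : ℕ, ∀ n, f n ω ≤ (b : ℝ)} ∩ ⋂ n, {ω | f n ω ≤ c}) ∪
        ({ω | ∃ b : ℕ, ∀ n, f n ω ≤ (b : ℝ)}ᶜ ∩ {ω | (0:ℝ) ≤ c}) := by
    ext ω
    by_cases hb : ∃ b : ℕ, ∀ n, f n ω ≤ (b : ℝ)
    · have hbdd : BddAbove (Set.range fun n => f n ω) := by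
        obtain ⟨b, hbb⟩ := hb
        exact ⟨b, by rintro x ⟨n, rfl⟩; exact hbb n⟩
      simp only [Set.mem_preimage, Set.mem_Iic, Set.mem_union, Set.mem_inter_iff,
        Set.mem_iInter, Set.mem_setOf_eq, Set.mem_compl_iff]
      constructor
      · intro h; exact Or.inl ⟨hb, fun n => le_trans (le_ciSup hbdd n) h⟩
      · rintro (⟨-, h⟩ | ⟨h, -⟩)
        · exact ciSup_le h
        · exact absurd hb h
    · have hnb : ¬ BddAbove (Set.range fun n => f n ω) := by
        intro hbdd
        obtain ⟨r, hr⟩ := hbdd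
        refine hb ⟨⌈r⌉₊, fun n => ?_⟩
        exact le_trans (hr ⟨n, rfl⟩) (Nat.le_ceil r)
      have hz : (⨆ n, f n ω) = 0 := by
        rw [iSup, csSup_of_not_bddAbove hnb, Real.sSup_empty]
      simp [hz, hb]
  rw [hset]
  refine MeasurableSet.union (h1.inter (MeasurableSet.iInter fun n =>
    measurableSet_le (hf n) measurable_const)) (h1.compl.inter ?_)
  by_cases h : (0:ℝ) ≤ c
  · have : {ω : Ω | (0:ℝ) ≤ c} = Set.univ := by ext; simp [h]
    rw [this]; exact MeasurableSet.univ
  · have : {ω : Ω | (0:ℝ) ≤ c} = ∅ := by ext; simp [h]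
    rw [this]; exact MeasurableSet.empty

lemma real_iSup_nonneg_of_zero_mem {f : ℕ → ℝ} (h0 : f 0 = 0) : 0 ≤ ⨆ n, f n := by
  by_cases hb : BddAbove (Set.range f)
  · calc (0:ℝ) = f 0 := h0.symm
      _ ≤ ⨆ n, f n := le_ciSup hb 0
  · rw [iSup, csSup_of_not_bddAbove hb, Real.sSup_empty]

end Helpers

section Tuple

variable {Ω : Type*} [MeasureSpace Ω] [IsProbabilityMeasure (ℙ : Measure Ω)]
variable {X : ℕ → Ω → ℝ}

lemma map_tuple (hX : IsIIDSeq X) (n m : ℕ) :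
    Measure.map (fun ω (i : Fin n) => X (↑i + m) ω) ℙ
      = Measure.pi (fun _ : Fin n => Measure.map (X 0) ℙ) := by
  have htup : Measurable (fun ω (i : Fin n) => X (↑i + m) ω) :=
    measurable_pi_lambda _ fun i => hX.1 _
  haveI : IsProbabilityMeasure (Measure.map (X 0) ℙ) :=
    Measure.isProbabilityMeasure_map (hX.1 0).aemeasurable
  refine (Measure.pi_eq fun s hs => ?_).symm
  rw [Measure.map_apply htup (MeasurableSet.univ_pi hs)]
  classical
  set sets : ℕ → Set ℝ := fun j =>
    if h : m ≤ j ∧ j < m + n then s ⟨j - m, by omega⟩ else Set.univ with hsets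
  have hmeas : ∀ j ∈ Finset.Ico m (m + n), MeasurableSet (sets j) := by
    intro j hj
    rw [Finset.mem_Ico] at hj
    simp only [hsets, dif_pos hj]
    exact hs _
  have hpre : (fun ω (i : Fin n) => X (↑i + m) ω) ⁻¹' Set.pi Set.univ s
      = ⋂ j ∈ Finset.Ico m (m + n), X j ⁻¹' (sets j) := by
    ext ω
    simp only [Set.mem_preimage, Set.mem_pi, Set.mem_univ, forall_true_left, Set.mem_iInter,
      Finset.mem_Ico]
    constructor
    · rintro h j ⟨hj1, hj2⟩
      have h2 := h ⟨j - m, by omega⟩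
      simp only [hsets, dif_pos (And.intro hj1 hj2)]
      have : j - m + m = j := by omega
      rw [this] at h2
      exact h2
    · intro h i
      have h2 := h (↑i + m) ⟨by omega, by omega⟩
      simp only [hsets, dif_pos (And.intro (by omega : m ≤ ↑i + m) (by omega : ↑i + m < m + n))] at h2
      have heq : (⟨↑i + m - m, by omega⟩ : Fin n) = i := by
        ext; simp
      rwa [heq] at h2
  rw [hpre, hX.2.1.measure_inter_preimage_eq_mul _ hmeas]
  set F : ℕ → ℝ≥0∞ := fun j => if h : j < n then Measure.map (X 0) ℙ (s ⟨j, h⟩) else 1 with hF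
  have hL : ∏ j ∈ Finset.Ico m (m + n), ℙ (X j ⁻¹' sets j) = ∏ j ∈ Finset.range n, F j := by
    rw [Finset.prod_Ico_eq_prod_range]
    have hnn : m + n - m = n := by omega
    rw [hnn]
    refine Finset.prod_congr rfl fun i hi => ?_
    rw [Finset.mem_range] at hi
    have h1 : sets (m + i) = s ⟨i, hi⟩ := by
      simp only [hsets, dif_pos (And.intro (by omega : m ≤ m + i) (by omega : m + i < m + n))]
      congr 1
      ext; simp
    rw [h1, hF]
    simp only [dif_pos hi]
    rw [← Measure.map_apply (hX.1 (m + i)) (hs _), (hX.2.2 (m + i)).map_eq]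
  have hR : ∏ i : Fin n, Measure.map (X 0) ℙ (s i) = ∏ j ∈ Finset.range n, F j := by
    rw [← Fin.prod_univ_eq_prod_range F n]
    refine Finset.prod_congr rfl fun i _ => ?_
    simp only [hF, dif_pos i.isLt]
  rw [hL, hR]

/-- The shifted finite-horizon events have the same probability. -/
lemma shift_event_prob (hX : IsIIDSeq X) (c : ℝ) (n : ℕ) (m m' : ℕ) :
    ℙ {ω | ∀ k, k ≤ n → (∑ i ∈ Finset.range k, X (i + m) ω) ≤ c}
      = ℙ {ω | ∀ k, k ≤ n → (∑ i ∈ Finset.range k, X (i + m') ω) ≤ c} := by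
  classical
  set C : Set (Fin n → ℝ) :=
    {v | ∀ k, k ≤ n → (∑ i : Fin n, if (i : ℕ) < k then v i else 0) ≤ c} with hC
  have hCmeas : MeasurableSet C := by
    have : C = ⋂ (k : ℕ), ⋂ (_ : k ≤ n),
        {v : Fin n → ℝ | (∑ i : Fin n, if (i : ℕ) < k then v i else 0) ≤ c} := by
      ext v; simp [hC]
    rw [this]
    refine MeasurableSet.iInter fun k => MeasurableSet.iInter fun _ => ?_
    refine measurableSet_le (Finset.measurable_sum _ fun i _ => ?_) measurable_const
    by_cases h : (i : ℕ) < k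
    · simpa [h] using measurable_pi_apply i
    · simpa [h] using measurable_const
  have key : ∀ mm : ℕ, {ω | ∀ k, k ≤ n → (∑ i ∈ Finset.range k, X (i + mm) ω) ≤ c}
      = (fun ω (i : Fin n) => X (↑i + mm) ω) ⁻¹' C := by
    intro mm
    ext ω
    simp only [Set.mem_setOf_eq, Set.mem_preimage, hC]
    have hsum : ∀ k, k ≤ n → (∑ i : Fin n, if (i : ℕ) < k then X (↑i + mm) ω else 0)
        = ∑ i ∈ Finset.range k, X (i + mm) ω := by
      intro k hk
      rw [Fin.sum_univ_eq_sum_range (fun i => if i < k then X (i + mm) ω else 0) n]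
      rw [← Finset.sum_filter]
      congr 1
      ext j; simp only [Finset.mem_filter, Finset.mem_range]
      omega
    constructor
    · intro h k hk; rw [hsum k hk]; exact h k hk
    · intro h k hk; have := h k hk; rwa [hsum k hk] at this
  have htup : ∀ mm : ℕ, Measurable (fun ω (i : Fin n) => X (↑i + mm) ω) :=
    fun mm => measurable_pi_lambda _ fun i => hX.1 _
  rw [key m, key m', ← Measure.map_apply (htup m) hCmeas, ← Measure.map_apply (htup m') hCmeas,
    map_tuple hX n m, map_tuple hX n m']

end Tuple

section Unbounded

variable {Ω : Type*} [MeasureSpace Ω] [IsProbabilityMeasure (ℙ : Measure Ω)]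

lemma walk_unbounded (X : ℕ → Ω → ℝ) (hX : IsIIDSeq X)
    (hneg : 0 < ℙ {ω | X 0 ω < 0}) (hint : Integrable (X 0) ℙ)
    (hmean : (∫ ω, X 0 ω ∂ℙ) = 0) :
    ℙ {ω | ∀ c : ℕ, ∃ n, (c : ℝ) < walk X n ω} = 1 := by
  have hwm : ∀ n, Measurable (walk X n) := fun n =>
    Finset.measurable_sum _ fun i _ => hX.1 i
  set T : Set Ω := {ω | ∀ c : ℕ, ∃ n, (c : ℝ) < walk X n ω} with hT
  -- Kolmogorov 0-1 law
  have h01 : ℙ T = 0 ∨ ℙ T = 1 := by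
    refine measure_zero_or_one_of_measurableSet_limsup_atTop
      (s := fun n => MeasurableSpace.comap (X n) inferInstance)
      (fun n => (hX.1 n).comap_le) hX.2.1.iIndep ?_
    rw [limsup_eq_iInf_iSup_of_nat, MeasurableSpace.measurableSet_iInf]
    intro n
    have hXi : ∀ i, n ≤ i →
        Measurable[⨆ i, ⨆ (_ : i ≥ n), MeasurableSpace.comap (X i) inferInstance] (X i) :=
      fun i hi => Measurable.of_comap_le (le_iSup₂ (f := fun i (_ : i ≥ n) =>
        MeasurableSpace.comap (X i) inferInstance) i hi)
    have hTeq : T = ⋂ c : ℕ, ⋃ k : ℕ, {ω | (c : ℝ) < ∑ i ∈ Finset.Ico n (n + k), X i ω} := by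
      ext ω
      simp only [hT, Set.mem_setOf_eq, Set.mem_iInter, Set.mem_iUnion]
      constructor
      · intro h c
        set R : ℝ := Finset.sup' (Finset.range (n + 1)) ⟨0, by simp⟩ (fun j => walk X j ω) with hR
        set r : ℝ := max R ((c : ℝ) + walk X n ω) with hr
        obtain ⟨j, hj⟩ := h ⌈r⌉₊
        have hrj : r < walk X j ω := lt_of_le_of_lt (Nat.le_ceil r) hj
        have hjn : n < j := by
          by_contra hle
          push_neg at hle
          have h1 : walk X j ω ≤ R := Finset.le_sup' (fun j => walk X j ω) (Finset.mem_range.mpr (show j < n + 1 by omega))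
          have h2 : R ≤ r := le_max_left _ _
          linarith
        refine ⟨j - n, ?_⟩
        have hsum : ∑ i ∈ Finset.Ico n (n + (j - n)), X i ω = walk X j ω - walk X n ω := by
          have hjj : n + (j - n) = j := by omega
          rw [hjj, walk, walk, Finset.sum_Ico_eq_sub _ (show n ≤ j by omega)]
        rw [hsum]
        have : (c : ℝ) + walk X n ω ≤ r := le_max_right _ _
        linarith
      · intro h c
        obtain ⟨k, hk⟩ := h ⌈(c : ℝ) - walk X n ω⌉₊
        refine ⟨n + k, ?_⟩
        have hsum : ∑ i ∈ Finset.Ico n (n + k), X i ω = walk X (n + k) ω - walk X n ω := by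
          rw [walk, walk, Finset.sum_Ico_eq_sub _ (Nat.le_add_right n k)]
        rw [hsum] at hk
        have h2 : (c : ℝ) - walk X n ω ≤ (⌈(c : ℝ) - walk X n ω⌉₊ : ℝ) := Nat.le_ceil _
        linarith
    rw [hTeq]
    exact MeasurableSet.iInter fun c => MeasurableSet.iUnion fun k =>
      measurableSet_lt measurable_const
        (Finset.measurable_sum _ fun i hi => hXi i (Finset.mem_Ico.mp hi).1)
  rcases h01 with h0 | h1
  · -- derive a contradiction from `ℙ T = 0`
    exfalso
    have hae : ∀ᵐ ω ∂(ℙ : Measure Ω), ∃ c : ℕ, ∀ k, walk X k ω ≤ (c : ℝ) := by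
      rw [ae_iff]
      have : {ω | ¬ ∃ c : ℕ, ∀ k, walk X k ω ≤ (c : ℝ)} = T := by
        ext ω
        simp only [hT, Set.mem_setOf_eq, not_exists, not_forall, not_le]
      rw [this]
      exact h0
    set S' : ℕ → Ω → ℝ := fun k ω => ∑ i ∈ Finset.range k, X (i + 1) ω with hS'
    have hS'm : ∀ k, Measurable (S' k) := fun k =>
      Finset.measurable_sum _ fun i _ => hX.1 _
    set M : Ω → ℝ := fun ω => ⨆ k, walk X k ω with hM
    set M' : Ω → ℝ := fun ω => ⨆ k, S' k ω with hM'
    have hS'k : ∀ k ω, walk X (k + 1) ω = X 0 ω + S' k ω := by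
      intro k ω
      rw [walk, Finset.sum_range_succ' (fun i => X i ω) k, hS']
      ring
    have hMmeas : Measurable M := measurable_real_iSup hwm
    have hM'meas : Measurable M' := measurable_real_iSup hS'm
    -- boundedness on the a.e. set
    have hbddS : ∀ ω, (∃ c : ℕ, ∀ k, walk X k ω ≤ (c : ℝ)) →
        BddAbove (Set.range fun k => walk X k ω) := by
      rintro ω ⟨c, hc⟩; exact ⟨c, by rintro x ⟨k, rfl⟩; exact hc k⟩
    have hbddS' : ∀ ω, (∃ c : ℕ, ∀ k, walk X k ω ≤ (c : ℝ)) →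
        BddAbove (Set.range fun k => S' k ω) := by
      rintro ω ⟨c, hc⟩
      refine ⟨(c : ℝ) - X 0 ω, ?_⟩
      rintro x ⟨k, rfl⟩
      have := hc (k + 1)
      rw [hS'k k ω] at this
      linarith
    -- pointwise decomposition
    have hMeq : ∀ ω, (∃ c : ℕ, ∀ k, walk X k ω ≤ (c : ℝ)) →
        M ω = max 0 (X 0 ω + M' ω) := by
      intro ω hb
      have h1 := hbddS ω hb
      have h2 := hbddS' ω hb
      apply le_antisymm
      · refine ciSup_le fun k => ?_
        cases k with
        | zero =>
          have : walk X 0 ω = 0 := by simp [walk]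
          rw [this]; exact le_max_left _ _
        | succ k =>
          rw [hS'k k ω]
          refine le_trans ?_ (le_max_right _ _)
          have := le_ciSup h2 k
          linarith
      · refine max_le ?_ ?_
        · have := le_ciSup h1 0
          exact le_trans (le_of_eq (walk_zero X ω).symm) this
        · have h3 : M' ω ≤ M ω - X 0 ω := by
            refine ciSup_le fun k => ?_
            have h4 := le_ciSup h1 (k + 1)
            rw [hS'k k ω] at h4
            simp only [hM]
            linarith
          simp only [hM'] at h3
          linarith
    have hM0 : ∀ ω, 0 ≤ M ω :=
      fun ω => real_iSup_nonneg_of_zero_mem (by simp [walk])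
    have hM'0 : ∀ ω, 0 ≤ M' ω :=
      fun ω => real_iSup_nonneg_of_zero_mem (by simp [hS'])
    -- CDF equality
    have hCDF : ∀ c : ℝ, ℙ {ω | M ω ≤ c} = ℙ {ω | M' ω ≤ c} := by
      intro c
      set A : ℕ → Set Ω := fun n => ⋂ k, ⋂ (_ : k ≤ n), {ω | walk X k ω ≤ c} with hA
      set A' : ℕ → Set Ω := fun n => ⋂ k, ⋂ (_ : k ≤ n), {ω | S' k ω ≤ c} with hA'
      have hAeq : ∀ n, ℙ (A n) = ℙ (A' n) := by
        intro n
        have h := shift_event_prob hX c n 0 1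
        have e0 : A n = {ω | ∀ k, k ≤ n → (∑ i ∈ Finset.range k, X (i + 0) ω) ≤ c} := by
          ext ω; simp [hA, walk]
        have e1 : A' n = {ω | ∀ k, k ≤ n → (∑ i ∈ Finset.range k, X (i + 1) ω) ≤ c} := by
          ext ω; simp [hA', hS']
        rw [e0, e1, h]
      have hlim : ∀ (B : ℕ → Set Ω), (∀ n, MeasurableSet (B n)) →
          (∀ a b : ℕ, a ≤ b → B b ⊆ B a) →
          Tendsto (fun n => ℙ (B n)) atTop (𝓝 (ℙ (⋂ n, B n))) := by
        intro B hBm hBmono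
        exact tendsto_measure_iInter_atTop (fun n => (hBm n).nullMeasurableSet)
          (fun a b hab => hBmono a b hab) ⟨0, measure_ne_top _ _⟩
      have hAm : ∀ n, MeasurableSet (A n) := fun n =>
        MeasurableSet.iInter fun k => MeasurableSet.iInter fun _ =>
          measurableSet_le (hwm k) measurable_const
      have hA'm : ∀ n, MeasurableSet (A' n) := fun n =>
        MeasurableSet.iInter fun k => MeasurableSet.iInter fun _ =>
          measurableSet_le (hS'm k) measurable_const
      have hmono : ∀ a b : ℕ, a ≤ b → A b ⊆ A a := by
        intro a b hab ω hω
        simp only [hA, Set.mem_iInter] at hω ⊢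
        intro k hk; exact hω k (le_trans hk hab)
      have hmono' : ∀ a b : ℕ, a ≤ b → A' b ⊆ A' a := by
        intro a b hab ω hω
        simp only [hA', Set.mem_iInter] at hω ⊢
        intro k hk; exact hω k (le_trans hk hab)
      have hl1 := hlim A hAm hmono
      have hl2 := hlim A' hA'm hmono'
      have heq : (fun n => ℙ (A n)) = fun n => ℙ (A' n) := funext hAeq
      rw [heq] at hl1
      have hiA : ℙ (⋂ n, A n) = ℙ (⋂ n, A' n) := tendsto_nhds_unique hl1 hl2
      have hMA : ℙ {ω | M ω ≤ c} = ℙ (⋂ n, A n) := by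
        apply measure_congr
        rw [Filter.eventuallyEq_set]
        filter_upwards [hae] with ω hb
        have h1 := hbddS ω hb
        simp only [hA, Set.mem_iInter, Set.mem_setOf_eq]
        constructor
        · intro h n k _; exact le_trans (le_ciSup h1 k) h
        · intro h; exact ciSup_le fun k => h k k le_rfl
      have hM'A : ℙ {ω | M' ω ≤ c} = ℙ (⋂ n, A' n) := by
        apply measure_congr
        rw [Filter.eventuallyEq_set]
        filter_upwards [hae] with ω hb
        have h1 := hbddS' ω hb
        simp only [hA', Set.mem_iInter, Set.mem_setOf_eq]
        constructor
        · intro h n k _; exact le_trans (le_ciSup h1 k) h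
        · intro h; exact ciSup_le fun k => h k k le_rfl
      rw [hMA, hM'A, hiA]
    -- identical distribution of M and M'
    haveI hPM : IsProbabilityMeasure (Measure.map M ℙ) :=
      Measure.isProbabilityMeasure_map hMmeas.aemeasurable
    haveI hPM' : IsProbabilityMeasure (Measure.map M' ℙ) :=
      Measure.isProbabilityMeasure_map hM'meas.aemeasurable
    have hID : IdentDistrib M M' ℙ ℙ := by
      refine ⟨hMmeas.aemeasurable, hM'meas.aemeasurable, ?_⟩
      refine Measure.ext_of_Iic (Measure.map M ℙ) (Measure.map M' ℙ) fun a => ?_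
      rw [Measure.map_apply hMmeas measurableSet_Iic, Measure.map_apply hM'meas measurableSet_Iic]
      exact hCDF a
    -- independence of X 0 and M'
    have hprod : ∀ a b : ℝ, ℙ ({ω | X 0 ω ≤ a} ∩ {ω | M' ω ≤ b})
        = ℙ {ω | X 0 ω ≤ a} * ℙ {ω | M' ω ≤ b} := by
      intro a b
      have hM'm2 : Measurable[⨆ i ∈ {i : ℕ | 1 ≤ i}, MeasurableSpace.comap (X i) inferInstance]
          M' := by
        refine measurable_real_iSup fun k => ?_
        refine Finset.measurable_sum _ fun i _ => ?_
        exact Measurable.of_comap_le (le_iSup₂ (f := fun i (_ : i ∈ {i : ℕ | 1 ≤ i}) =>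
          MeasurableSpace.comap (X i) inferInstance) (i + 1) (by simp))
      have hIndep : Indep (⨆ i ∈ ({0} : Set ℕ), MeasurableSpace.comap (X i) inferInstance)
          (⨆ i ∈ {i : ℕ | 1 ≤ i}, MeasurableSpace.comap (X i) inferInstance) ℙ := by
        refine indep_iSup_of_disjoint (fun i => (hX.1 i).comap_le) hX.2.1.iIndep ?_
        rw [Set.disjoint_left]
        rintro a rfl
        simp
      have hX0m1 : Measurable[⨆ i ∈ ({0} : Set ℕ), MeasurableSpace.comap (X i) inferInstance]
          (X 0) :=
        Measurable.of_comap_le (le_iSup₂ (f := fun i (_ : i ∈ ({0} : Set ℕ)) =>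
          MeasurableSpace.comap (X i) inferInstance) 0 rfl)
      have h1 := hX0m1 measurableSet_Iic (t := Set.Iic a)
      have h2 := hM'm2 measurableSet_Iic (t := Set.Iic b)
      exact (Indep_iff _ _ _).mp hIndep _ _ h1 h2
    -- the key a.e. inequality `0 ≤ X 0 + M'`
    set Z : Ω → ℝ := fun ω => X 0 ω + M' ω with hZ
    have hZmeas : Measurable Z := (hX.1 0).add hM'meas
    set nP : Ω → ℝ := fun ω => max (-(Z ω)) 0 with hnP
    have hnPmeas : Measurable nP := hZmeas.neg.max measurable_const
    have hnPnn : ∀ ω, 0 ≤ nP ω := fun ω => le_max_right _ _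
    have hnPle : ∀ ω, nP ω ≤ |X 0 ω| := by
      intro ω
      refine max_le ?_ (abs_nonneg _)
      have h1 := hM'0 ω
      have h2 : -(X 0 ω) ≤ |X 0 ω| := neg_le_abs _
      simp only [hZ]
      linarith
    have hnPint : Integrable nP ℙ := by
      refine Integrable.mono' hint.abs hnPmeas.aestronglyMeasurable (ae_of_all _ fun ω => ?_)
      rw [Real.norm_eq_abs, abs_of_nonneg (hnPnn ω)]
      exact hnPle ω
    have hrint : ∀ j : ℕ, Integrable (fun ω => if (j : ℝ) < Z ω then max (X 0 ω) 0 else 0) ℙ := by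
      intro j
      have hm : Measurable (fun ω => if (j : ℝ) < Z ω then max (X 0 ω) 0 else 0) :=
        Measurable.ite (measurableSet_lt measurable_const hZmeas)
          ((hX.1 0).max measurable_const) measurable_const
      refine Integrable.mono' hint.abs hm.aestronglyMeasurable (ae_of_all _ fun ω => ?_)
      rw [Real.norm_eq_abs]
      split_ifs with h
      · rw [abs_of_nonneg (le_max_right _ _)]
        exact max_le (le_abs_self _) (abs_nonneg _)
      · simp [abs_nonneg]
    have hminMint : ∀ j : ℕ, Integrable (fun ω => min (M ω) (j : ℝ)) ℙ := by
      intro j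
      refine Integrable.mono' (integrable_const (j : ℝ))
        ((hMmeas.min measurable_const).aestronglyMeasurable) (ae_of_all _ fun ω => ?_)
      rw [Real.norm_eq_abs, abs_of_nonneg (le_min (hM0 ω) (Nat.cast_nonneg j))]
      exact min_le_right _ _
    have hminM'int : ∀ j : ℕ, Integrable (fun ω => min (M' ω) (j : ℝ)) ℙ := by
      intro j
      refine Integrable.mono' (integrable_const (j : ℝ))
        ((hM'meas.min measurable_const).aestronglyMeasurable) (ae_of_all _ fun ω => ?_)
      rw [Real.norm_eq_abs, abs_of_nonneg (le_min (hM'0 ω) (Nat.cast_nonneg j))]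
      exact min_le_right _ _
    have hminZint : ∀ j : ℕ, Integrable (fun ω => min (Z ω) (j : ℝ)) ℙ := by
      intro j
      have hbint : Integrable (fun ω => (j : ℝ) + |X 0 ω|) ℙ := (integrable_const (j : ℝ)).add hint.abs
      refine Integrable.mono' hbint
        ((hZmeas.min measurable_const).aestronglyMeasurable) (ae_of_all _ fun ω => ?_)
      rw [Real.norm_eq_abs, abs_le]
      have habs : 0 ≤ |X 0 ω| := abs_nonneg _
      have hj0 : (0 : ℝ) ≤ (j : ℝ) := Nat.cast_nonneg j
      constructor
      · have h1 : -|X 0 ω| ≤ X 0 ω := neg_abs_le _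
        have h2 : X 0 ω ≤ Z ω := by simp only [hZ]; linarith [hM'0 ω]
        have := le_min (show -((j : ℝ) + |X 0 ω|) ≤ Z ω by linarith)
          (show -((j : ℝ) + |X 0 ω|) ≤ (j : ℝ) by linarith)
        linarith [this]
      · have := min_le_right (Z ω) (j : ℝ)
        linarith
    -- lemma (i): min (M ω) j = min (Z ω) j + nP ω
    have lem1 : ∀ z t : ℝ, 0 ≤ t → min (max 0 z) t = min z t + max (-z) 0 := by
      intro z t ht
      rcases le_total z 0 with h | h
      · rw [max_eq_left h, min_eq_left ht, min_eq_left (le_trans h ht),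
          max_eq_left (neg_nonneg.mpr h)]
        ring
      · rw [max_eq_right h, max_eq_right (neg_nonpos.mpr h)]
        ring
    have e1 : ∀ j : ℕ, (∫ ω, min (M ω) (j : ℝ) ∂ℙ)
        = (∫ ω, min (Z ω) (j : ℝ) ∂ℙ) + ∫ ω, nP ω ∂ℙ := by
      intro j
      rw [← integral_add (hminZint j) hnPint]
      apply integral_congr_ae
      filter_upwards [hae] with ω hb
      rw [hMeq ω hb]
      exact lem1 _ _ (Nat.cast_nonneg j)
    -- lemma (ii): min (M' ω) j + X 0 ω - r j ω ≤ min (Z ω) j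
    have lem2 : ∀ a x t : ℝ, 0 ≤ a → 0 ≤ t →
        min a t + x - (if t < x + a then max x 0 else 0) ≤ min (x + a) t := by
      intro a x t ha ht
      rcases le_total x 0 with hx | hx
      · have hkey : min a t + x ≤ min (x + a) t := by
          have h1 : min a t + x = min (a + x) (t + x) := (min_add_add_right a t x).symm
          rw [h1]
          exact min_le_min (le_of_eq (add_comm a x)) (by linarith)
        split_ifs with h
        · rw [max_eq_right hx]; linarith
        · linarith
      · split_ifs with h
        · rw [max_eq_left hx]
          have h2 : min a t ≤ min (x + a) t :=
            le_min (le_trans (min_le_left a t) (by linarith)) (min_le_right a t)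
          linarith
        · push_neg at h
          have h3 : a ≤ t := by linarith
          rw [min_eq_left h3, min_eq_left h]
          linarith
    have e2 : ∀ j : ℕ, (∫ ω, min (M' ω) (j : ℝ) ∂ℙ) + (∫ ω, X 0 ω ∂ℙ)
        - (∫ ω, if (j : ℝ) < Z ω then max (X 0 ω) 0 else 0 ∂ℙ)
        ≤ ∫ ω, min (Z ω) (j : ℝ) ∂ℙ := by
      intro j
      have hadd : Integrable (fun ω => min (M' ω) (j : ℝ) + X 0 ω) ℙ := (hminM'int j).add hint
      have hIL : Integrable (fun ω => min (M' ω) (j : ℝ) + X 0 ω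
          - (if (j : ℝ) < Z ω then max (X 0 ω) 0 else 0)) ℙ := hadd.sub (hrint j)
      have hsplit : (∫ ω, (min (M' ω) (j : ℝ) + X 0 ω
            - (if (j : ℝ) < Z ω then max (X 0 ω) 0 else 0)) ∂ℙ)
          = (∫ ω, min (M' ω) (j : ℝ) ∂ℙ) + (∫ ω, X 0 ω ∂ℙ)
            - ∫ ω, (if (j : ℝ) < Z ω then max (X 0 ω) 0 else 0) ∂ℙ := by
        rw [integral_sub hadd (hrint j), integral_add (hminM'int j) hint]
      rw [← hsplit]
      refine integral_mono_ae hIL (hminZint j)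
        (ae_of_all _ fun ω => ?_)
      exact lem2 (M' ω) (X 0 ω) (j : ℝ) (hM'0 ω) (Nat.cast_nonneg j)
    have e3 : ∀ j : ℕ, (∫ ω, min (M ω) (j : ℝ) ∂ℙ) = ∫ ω, min (M' ω) (j : ℝ) ∂ℙ := by
      intro j
      exact hID.comp (measurable_id.min measurable_const) |>.integral_eq
    have key : ∀ j : ℕ, (∫ ω, nP ω ∂ℙ)
        ≤ ∫ ω, if (j : ℝ) < Z ω then max (X 0 ω) 0 else 0 ∂ℙ := by
      intro j
      have h1 := e1 j
      have h2 := e2 j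
      have h3 := e3 j
      rw [hmean] at h2
      linarith
    have hr0 : Tendsto (fun j : ℕ => ∫ ω, if (j : ℝ) < Z ω then max (X 0 ω) 0 else 0 ∂ℙ)
        atTop (𝓝 (∫ _ω, (0 : ℝ) ∂(ℙ : Measure Ω))) := by
      refine tendsto_integral_of_dominated_convergence (fun ω => |X 0 ω|)
        (fun j => (Measurable.ite (measurableSet_lt measurable_const hZmeas)
          ((hX.1 0).max measurable_const) measurable_const).aestronglyMeasurable)
        hint.abs (fun j => ae_of_all _ fun ω => ?_) (ae_of_all _ fun ω => ?_)
      · rw [Real.norm_eq_abs]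
        split_ifs with h
        · rw [abs_of_nonneg (le_max_right _ _)]
          exact max_le (le_abs_self _) (abs_nonneg _)
        · simp [abs_nonneg]
      · refine Tendsto.congr' ?_ tendsto_const_nhds
        rw [Filter.EventuallyEq, eventually_atTop]
        refine ⟨⌈Z ω⌉₊, fun j hj => ?_⟩
        rw [if_neg]
        push_neg
        exact le_trans (Nat.le_ceil _) (Nat.cast_le.mpr hj)
    have hnP0 : (∫ ω, nP ω ∂ℙ) = 0 := by
      refine le_antisymm ?_ (integral_nonneg fun ω => hnPnn ω)
      have := ge_of_tendsto' hr0 key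
      rwa [integral_zero] at this
    have hZ0 : ∀ᵐ ω ∂(ℙ : Measure Ω), 0 ≤ Z ω := by
      have h := (integral_eq_zero_iff_of_nonneg_ae (ae_of_all _ fun ω => hnPnn ω) hnPint).mp hnP0
      filter_upwards [h] with ω hω
      simp only [hnP, Pi.zero_apply] at hω
      have : -(Z ω) ≤ 0 := by
        by_contra hc
        push_neg at hc
        rw [max_eq_left (le_of_lt hc)] at hω
        linarith
      linarith
    -- endgame
    have hex : ∃ c : ℕ, 0 < ℙ {ω | M ω ≤ (c : ℝ)} := by
      by_contra h
      push_neg at h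
      have hz : ∀ c : ℕ, ℙ {ω | M ω ≤ (c : ℝ)} = 0 := fun c => le_antisymm (h c) zero_le
      have hU : ℙ (⋃ c : ℕ, {ω | M ω ≤ (c : ℝ)}) = 0 := measure_iUnion_null hz
      have hG : ℙ {ω | ¬ ∃ c : ℕ, ∀ k, walk X k ω ≤ (c : ℝ)} = 0 := ae_iff.mp hae
      have hsub : Set.univ ⊆ {ω | ¬ ∃ c : ℕ, ∀ k, walk X k ω ≤ (c : ℝ)}
          ∪ ⋃ c : ℕ, {ω | M ω ≤ (c : ℝ)} := by
        intro ω _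
        by_cases hb : ∃ c : ℕ, ∀ k, walk X k ω ≤ (c : ℝ)
        · obtain ⟨c, hc⟩ := hb
          right
          exact Set.mem_iUnion.mpr ⟨c, ciSup_le hc⟩
        · left; exact hb
      have h1 : (1 : ℝ≥0∞) ≤ 0 := by
        calc (1 : ℝ≥0∞) = ℙ Set.univ := (measure_univ).symm
          _ ≤ ℙ ({ω | ¬ ∃ c : ℕ, ∀ k, walk X k ω ≤ (c : ℝ)} ∪ ⋃ c : ℕ, {ω | M ω ≤ (c : ℝ)}) :=
            measure_mono hsub
          _ ≤ ℙ {ω | ¬ ∃ c : ℕ, ∀ k, walk X k ω ≤ (c : ℝ)} + ℙ (⋃ c : ℕ, {ω | M ω ≤ (c : ℝ)}) :=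
            measure_union_le _ _
          _ = 0 := by rw [hG, hU, add_zero]
      simp at h1
    set SetC : Set ℝ := {c : ℝ | 0 < ℙ {ω | M ω ≤ c}} with hSetC
    have hCne : SetC.Nonempty := by
      obtain ⟨c, hc⟩ := hex
      exact ⟨(c : ℝ), hc⟩
    have hCbdd : BddBelow SetC := by
      refine ⟨0, fun c hc => ?_⟩
      by_contra hlt
      push_neg at hlt
      have hempty : {ω | M ω ≤ c} = ∅ := by
        ext ω
        simp only [Set.mem_setOf_eq, Set.mem_empty_iff_false, iff_false, not_le]
        exact lt_of_lt_of_le hlt (hM0 ω)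
      rw [hSetC, Set.mem_setOf_eq, hempty] at hc
      simp at hc
    set m0 : ℝ := sInf SetC with hm0
    have h_low : ∀ c : ℝ, c < m0 → ℙ {ω | M ω ≤ c} = 0 := by
      intro c hc
      by_contra h
      have hpos : 0 < ℙ {ω | M ω ≤ c} := pos_iff_ne_zero.mpr h
      have : m0 ≤ c := csInf_le hCbdd hpos
      linarith
    have h_up : ∀ ε : ℝ, 0 < ε → 0 < ℙ {ω | M ω ≤ m0 + ε} := by
      intro ε hε
      obtain ⟨c, hcC, hclt⟩ := (csInf_lt_iff hCbdd hCne).mp (by linarith : sInf SetC < m0 + ε)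
      exact lt_of_lt_of_le hcC (measure_mono fun ω h => le_trans h (le_of_lt hclt))
    have hsex : ∃ s : ℝ, 0 < s ∧ 0 < ℙ {ω | X 0 ω ≤ -s} := by
      by_contra h
      push_neg at h
      have hz : ∀ k : ℕ, ℙ {ω | X 0 ω ≤ -(1 / (k + 1 : ℝ))} = 0 := fun k =>
        le_antisymm (h _ (by positivity)) zero_le
      have hsub : {ω | X 0 ω < 0} ⊆ ⋃ k : ℕ, {ω | X 0 ω ≤ -(1 / (k + 1 : ℝ))} := by
        intro ω hω
        obtain ⟨k, hk⟩ := exists_nat_one_div_lt (show (0 : ℝ) < -X 0 ω by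
          simp only [Set.mem_setOf_eq] at hω; linarith)
        exact Set.mem_iUnion.mpr ⟨k, by simp only [Set.mem_setOf_eq]; linarith⟩
      have : ℙ {ω | X 0 ω < 0} = 0 :=
        le_antisymm (le_trans (measure_mono hsub) (le_of_eq (measure_iUnion_null hz))) zero_le
      rw [this] at hneg
      exact lt_irrefl _ hneg
    obtain ⟨s, hs0, hsP⟩ := hsex
    have hm0s : s ≤ m0 := by
      refine le_csInf hCne fun c hcC => ?_
      by_contra hlt
      push_neg at hlt
      have hZnull : ℙ {ω | ¬ (0 ≤ Z ω)} = 0 := ae_iff.mp hZ0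
      have hsubZ : {ω | X 0 ω ≤ -s} ∩ {ω | M' ω ≤ c} ⊆ {ω | ¬ (0 ≤ Z ω)} := by
        rintro ω ⟨h1, h2⟩
        simp only [Set.mem_setOf_eq] at h1 h2 ⊢
        simp only [hZ, not_le]
        linarith
      have hzero : ℙ ({ω | X 0 ω ≤ -s} ∩ {ω | M' ω ≤ c}) = 0 :=
        le_antisymm (le_trans (measure_mono hsubZ) (le_of_eq hZnull)) zero_le
      rw [hprod (-s) c] at hzero
      rcases mul_eq_zero.mp hzero with hcase | hcase
      · rw [hcase] at hsP; exact lt_irrefl _ hsP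
      · have : ℙ {ω | M ω ≤ c} = 0 := by rw [hCDF]; exact hcase
        rw [hSetC, Set.mem_setOf_eq, this] at hcC
        exact lt_irrefl _ hcC
    -- final contradiction
    have p2 : 0 < ℙ {ω | M' ω ≤ m0 + s / 4} := by
      rw [← hCDF]
      exact h_up _ (by positivity)
    have hEpos : 0 < ℙ ({ω | X 0 ω ≤ -s} ∩ {ω | M' ω ≤ m0 + s / 4}) := by
      rw [hprod]
      exact ENNReal.mul_pos (ne_of_gt hsP) (ne_of_gt p2)
    set c' : ℝ := max 0 (m0 - 3 * s / 4) with hc'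
    have hc'lt : c' < m0 := by
      rcases le_or_gt (m0 - 3 * s / 4) 0 with h | h
      · rw [hc', max_eq_left h]; linarith
      · rw [hc', max_eq_right (le_of_lt h)]; linarith
    have hsubE : ({ω | X 0 ω ≤ -s} ∩ {ω | M' ω ≤ m0 + s / 4})
        ∩ {ω | ∃ c : ℕ, ∀ k, walk X k ω ≤ (c : ℝ)} ⊆ {ω | M ω ≤ c'} := by
      rintro ω ⟨⟨h1, h2⟩, hb⟩
      simp only [Set.mem_setOf_eq] at h1 h2 ⊢
      rw [hMeq ω hb, hc']
      exact max_le_max le_rfl (by linarith)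
    have hG : ℙ {ω | ¬ ∃ c : ℕ, ∀ k, walk X k ω ≤ (c : ℝ)} = 0 := ae_iff.mp hae
    have hfinal : ℙ ({ω | X 0 ω ≤ -s} ∩ {ω | M' ω ≤ m0 + s / 4}) ≤ ℙ {ω | M ω ≤ c'} := by
      set E := {ω | X 0 ω ≤ -s} ∩ {ω | M' ω ≤ m0 + s / 4} with hE
      set G := {ω | ∃ c : ℕ, ∀ k, walk X k ω ≤ (c : ℝ)} with hGdef
      calc ℙ E ≤ ℙ (E ∩ G) + ℙ (E \ G) := measure_le_inter_add_diff ℙ E G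
        _ ≤ ℙ {ω | M ω ≤ c'} + ℙ {ω | ¬ ∃ c : ℕ, ∀ k, walk X k ω ≤ (c : ℝ)} := by
            refine add_le_add (measure_mono hsubE) (measure_mono ?_)
            intro ω hω
            exact hω.2
        _ = ℙ {ω | M ω ≤ c'} := by rw [hG, add_zero]
    rw [h_low c' hc'lt] at hfinal
    exact absurd (lt_of_lt_of_le hEpos hfinal) (lt_irrefl _)
  · exact h1

end Unbounded


section Glue
variable {Ω : Type*} [MeasureSpace Ω] [IsProbabilityMeasure (ℙ : Measure Ω)]

lemma mass_pos (X : ℕ → Ω → ℝ) (hnd : ℙ {ω | X 0 ω ≠ 0} ≠ 0)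
    (hint : Integrable (X 0) ℙ) (hmean : (∫ ω, X 0 ω ∂ℙ) = 0) :
    0 < ℙ {ω | X 0 ω < 0} ∧ 0 < ℙ {ω | 0 < X 0 ω} := by
  have hzero : ∀ (f : Ω → ℝ), Integrable f ℙ → (∫ ω, f ω ∂ℙ) = 0 →
      ℙ {ω | f ω < 0} = 0 → ∀ᵐ ω ∂(ℙ : Measure Ω), f ω = 0 := by
    intro f hfi hfm h0
    have hnn0 : ∀ᵐ ω ∂(ℙ : Measure Ω), 0 ≤ f ω := by
      rw [ae_iff]
      have : {ω | ¬ 0 ≤ f ω} = {ω | f ω < 0} := by ext ω; simp [not_le]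
      rw [this]; exact h0
    have hnn : 0 ≤ᵐ[(ℙ : Measure Ω)] f := by
      filter_upwards [hnn0] with ω h using by simpa using h
    have h := (integral_eq_zero_iff_of_nonneg_ae hnn hfi).mp hfm
    filter_upwards [h] with ω hω using hω
  constructor
  · by_contra h
    have h0 : ℙ {ω | X 0 ω < 0} = 0 := by
      by_contra h'; exact h (pos_iff_ne_zero.mpr h')
    have hz := hzero (X 0) hint hmean h0
    rw [ae_iff] at hz
    exact hnd hz
  · by_contra h
    have h0 : ℙ {ω | 0 < X 0 ω} = 0 := by
      by_contra h'; exact h (pos_iff_ne_zero.mpr h')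
    have h0' : ℙ {ω | (fun ω => -X 0 ω) ω < 0} = 0 := by
      have : {ω | (fun ω => -X 0 ω) ω < 0} = {ω | 0 < X 0 ω} := by ext ω; simp
      rw [this]; exact h0
    have hz := hzero (fun ω => -X 0 ω) hint.neg (by rw [integral_neg, hmean, neg_zero]) h0'
    rw [ae_iff] at hz
    apply hnd
    have heq : {ω | X 0 ω ≠ 0} = {a | ¬ (fun ω => -X 0 ω) a = 0} := by ext ω; simp
    rw [heq]; exact hz

lemma ae_cross (X : ℕ → Ω → ℝ) (hX : IsIIDSeq X) (hnd : ℙ {ω | X 0 ω ≠ 0} ≠ 0)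
    (hint : Integrable (X 0) ℙ) (hmean : (∫ ω, X 0 ω ∂ℙ) = 0) :
    ∀ᵐ ω ∂(ℙ : Measure Ω), ∀ m, ∃ n, m < n ∧ walk X n ω ≤ 0 ∧ 0 < walk X (n + 1) ω := by
  obtain ⟨hneg, hpos⟩ := mass_pos X hnd hint hmean
  have hwm : ∀ n, Measurable (walk X n) := fun n =>
    Finset.measurable_sum _ fun i _ => hX.1 i
  set Y : ℕ → Ω → ℝ := fun i ω => -X i ω with hY
  have hYiid : IsIIDSeq Y := by
    refine ⟨fun i => (hX.1 i).neg, ?_, fun i => ?_⟩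
    · exact hX.2.1.comp (fun _ => fun x : ℝ => -x) (fun _ => measurable_neg)
    · exact (hX.2.2 i).comp measurable_neg
  have hwalkY : ∀ n ω, walk Y n ω = -walk X n ω := by
    intro n ω; simp [walk, hY]
  have hnegY : 0 < ℙ {ω | Y 0 ω < 0} := by
    have : {ω | Y 0 ω < 0} = {ω | 0 < X 0 ω} := by ext ω; simp [hY]
    rw [this]; exact hpos
  have hintY : Integrable (Y 0) ℙ := by
    have : Y 0 = fun ω => -X 0 ω := rfl
    rw [this]; exact hint.neg
  have hmeanY : (∫ ω, Y 0 ω ∂ℙ) = 0 := by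
    simp only [hY]
    rw [integral_neg, hmean, neg_zero]
  have hup := walk_unbounded X hX hneg hint hmean
  have hdn := walk_unbounded Y hYiid hnegY hintY hmeanY
  have hmeasT : ∀ (W : ℕ → Ω → ℝ), (∀ n, Measurable (W n)) →
      MeasurableSet {ω | ∀ c : ℕ, ∃ n, (c : ℝ) < W n ω} := by
    intro W hW
    have : {ω | ∀ c : ℕ, ∃ n, (c : ℝ) < W n ω}
        = ⋂ c : ℕ, ⋃ n : ℕ, {ω | (c : ℝ) < W n ω} := by
      ext ω; simp
    rw [this]
    exact MeasurableSet.iInter fun c => MeasurableSet.iUnion fun n =>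
      measurableSet_lt measurable_const (hW n)
  have haeup : ∀ᵐ ω ∂(ℙ : Measure Ω), ∀ c : ℕ, ∃ n, (c : ℝ) < walk X n ω := by
    apply mem_ae_iff.mpr
    rw [measure_compl (hmeasT _ hwm) (measure_ne_top _ _), hup, measure_univ]
    simp
  have hwmY : ∀ n, Measurable (walk Y n) := fun n =>
    Finset.measurable_sum _ fun i _ => hYiid.1 i
  have haedn : ∀ᵐ ω ∂(ℙ : Measure Ω), ∀ c : ℕ, ∃ n, (c : ℝ) < walk Y n ω := by
    apply mem_ae_iff.mpr
    rw [measure_compl (hmeasT _ hwmY) (measure_ne_top _ _), hdn, measure_univ]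
    simp
  filter_upwards [haeup, haedn] with ω hu hd
  intro m
  -- step A: go below 0 after time m
  have hA : ∃ n1, m < n1 ∧ walk X n1 ω ≤ 0 := by
    set R : ℝ := Finset.sup' (Finset.range (m + 1)) ⟨0, by simp⟩ (fun j => -walk X j ω) with hR
    obtain ⟨n1, hn1⟩ := hd ⌈R⌉₊
    rw [hwalkY] at hn1
    have hlt : R < -walk X n1 ω := lt_of_le_of_lt (Nat.le_ceil R) hn1
    have hmlt : m < n1 := by
      by_contra hle
      push_neg at hle
      have h1 : -walk X n1 ω ≤ R :=
        Finset.le_sup' (fun j => -walk X j ω) (Finset.mem_range.mpr (by omega))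
      linarith
    have hle0 : walk X n1 ω ≤ 0 := by
      have h0 : (0 : ℝ) ≤ (⌈R⌉₊ : ℝ) := Nat.cast_nonneg _
      linarith
    exact ⟨n1, hmlt, hle0⟩
  obtain ⟨n1, hmn1, hn1le⟩ := hA
  -- step B: go above 0 after time n1
  have hB : ∃ n2, n1 < n2 ∧ 0 < walk X n2 ω := by
    set R : ℝ := Finset.sup' (Finset.range (n1 + 1)) ⟨0, by simp⟩ (fun j => walk X j ω) with hR
    obtain ⟨n2, hn2⟩ := hu ⌈R⌉₊
    have hlt : R < walk X n2 ω := lt_of_le_of_lt (Nat.le_ceil R) hn2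
    have hmlt : n1 < n2 := by
      by_contra hle
      push_neg at hle
      have h1 : walk X n2 ω ≤ R :=
        Finset.le_sup' (fun j => walk X j ω) (Finset.mem_range.mpr (by omega))
      linarith
    exact ⟨n2, hmlt, lt_of_le_of_lt (Nat.cast_nonneg _) hn2⟩
  obtain ⟨n2, hn12, hn2pos⟩ := hB
  -- step C: take the last nonpositive time before the first positive time after n1
  have hEne : {j | n1 < j ∧ 0 < walk X j ω}.Nonempty := ⟨n2, hn12, hn2pos⟩
  set k0 := sInf {j | n1 < j ∧ 0 < walk X j ω} with hk0def
  obtain ⟨hk0gt, hk0pos⟩ := Nat.sInf_mem hEne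
  refine ⟨k0 - 1, by omega, ?_, ?_⟩
  · rcases Nat.lt_or_ge n1 (k0 - 1) with h | h
    · by_contra hp
      push_neg at hp
      exact Nat.notMem_of_lt_sInf (show k0 - 1 < k0 by omega) ⟨h, hp⟩
    · have hn1eq : k0 - 1 = n1 := by omega
      rw [hn1eq]
      exact hn1le
  · have hplus : k0 - 1 + 1 = k0 := by omega
    rw [hplus]
    exact hk0pos

end Glue

/-- **Equation (reduction).** For a non-degenerate centered walk,
`P(min_{1≤k≤N} A_k > 0) = P(min_{1≤k≤η(N)} A_{Θ_k} > 0, A₁ > 0, A_N > 0)`. -/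
theorem reduction_to_cycles
    {Ω : Type*} [MeasureSpace Ω] [IsProbabilityMeasure (ℙ : Measure Ω)]
    (X : ℕ → Ω → ℝ) (hX : IsIIDSeq X)
    (hnd : ℙ {ω | X 0 ω ≠ 0} ≠ 0)
    (hint : Integrable (X 0) ℙ) (hmean : (∫ ω, X 0 ω ∂ℙ) = 0) :
    ∀ N : ℕ, 1 ≤ N →
      ℙ {ω | ∀ k ∈ Finset.Icc 1 N, 0 < area X k ω} =
        ℙ {ω | (∀ k, 1 ≤ k → k ≤ eta X N ω → 0 < area X (crossTime X k ω) ω) ∧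
          0 < area X 1 ω ∧ 0 < area X N ω} := by
  intro N hN
  have hcross := ae_cross X hX hnd hint hmean
  apply measure_congr
  rw [Filter.eventuallyEq_set]
  filter_upwards [hcross] with ω hω
  exact det_iff X ω hω N hN
end
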